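/- arXiv:2405.20464 — 5 statements merged into one kernel-verified Lean document; each statement's English description precedes it below -/
import Mathlib

section
/- Fix n ≥ 1 and equip ℝⁿ with its standard Euclidean inner product ⟨·,·⟩, so that Q_{n,0}(ξ) = ⟨ξ, ξ⟩. There is a surjective group homomorphism ρ : Pin_{n,0} → O(n), where O(n) is the group of linear isometric automorphisms of Euclidean ℝⁿ, such that for every ξ ∈ ℝⁿ with Q_{n,0}(ξ) = 1 the isometry ρ(ι(ξ)) is the reflection η ↦ η − 2⟨ξ, η⟩ ξ in the hyperplane orthogonal to ξ, and the kernel of ρ is exactly {1, −1}. Thus Pin_{n,0} is a double cover of the orthogonal group O(n). -/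
noncomputable section
open CliffordAlgebra

/-- The diagonal quadratic form on `ℝⁿ` whose first `p` coefficients are `+1`
and whose remaining coefficients are `-1`; for `n = p + q` this is `Q_{p,q}`. -/
def Qsig (n p : ℕ) : QuadraticForm ℝ (Fin n → ℝ) :=
  QuadraticMap.weightedSumSquares ℝ (fun i : Fin n => if (i : ℕ) < p then (1 : ℝ) else -1)

/-- The Pin group of a real quadratic form `Q`: the subgroup of the unit group of the
Clifford algebra generated by the units whose value is `ι Q ξ` for some vector `ξ`
with `Q ξ = 1` or `Q ξ = -1`. -/
def pinGrp {V : Type*} [AddCommGroup V] [Module ℝ V] (Q : QuadraticForm ℝ V) :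
    Subgroup (CliffordAlgebra Q)ˣ :=
  Subgroup.closure {u : (CliffordAlgebra Q)ˣ |
    ∃ ξ : V, (↑u : CliffordAlgebra Q) = ι Q ξ ∧ (Q ξ = 1 ∨ Q ξ = -1)}


namespace PinCover
open RealInnerProductSpace
open Submodule
variable {n : ℕ}

lemma Qsig_apply (v : Fin n → ℝ) : Qsig n n v = ∑ i, v i * v i := by
  simp [Qsig, QuadraticMap.weightedSumSquares_apply, Fin.is_lt]

lemma polar_Qsig (x y : Fin n → ℝ) :
    QuadraticMap.polar (⇑(Qsig n n)) x y = 2 * ∑ i, x i * y i := by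
  simp only [QuadraticMap.polar, Qsig_apply, Pi.add_apply]
  rw [← Finset.sum_sub_distrib, ← Finset.sum_sub_distrib, Finset.mul_sum]
  exact Finset.sum_congr rfl fun i _ => by ring

def dv (v : Fin n → ℝ) : Module.Dual ℝ (Fin n → ℝ) := ∑ i, v i • LinearMap.proj i

lemma dv_apply (v w : Fin n → ℝ) : dv v w = ∑ i, v i * w i := by
  simp [dv, LinearMap.sum_apply]

lemma dv_single (i : Fin n) : dv (Pi.single i (1:ℝ)) = LinearMap.proj i := by
  ext w
  simp [dv_apply, Pi.single_apply, ite_mul, eq_comm]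

lemma ι_mul_sub_involute (v : Fin n → ℝ) (x : CliffordAlgebra (Qsig n n)) :
    ι (Qsig n n) v * x - involute x * ι (Qsig n n) v
      = (2:ℝ) • contractLeft (Q := Qsig n n) (dv v) x := by
  induction' x using CliffordAlgebra.left_induction with r a b ha hb a m ha
  · rw [AlgHom.commutes, ← Algebra.commutes, sub_self, contractLeft_algebraMap, smul_zero]
  · rw [map_add, map_add, mul_add, add_mul, add_sub_add_comm, ha, hb, smul_add]
  · have ha' : involute a * ι (Qsig n n) v
        = ι (Qsig n n) v * a - (2:ℝ) • contractLeft (Q := Qsig n n) (dv v) a := by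
      rw [← ha]; abel
    have swap : ι (Qsig n n) v * ι (Qsig n n) m
        = algebraMap ℝ _ (QuadraticMap.polar (⇑(Qsig n n)) v m)
          - ι (Qsig n n) m * ι (Qsig n n) v := by
      rw [← ι_mul_ι_add_swap v m]; abel
    rw [map_mul, involute_ι, contractLeft_ι_mul, neg_mul, neg_mul, sub_neg_eq_add,
      mul_assoc, ha', mul_sub, ← mul_assoc, swap, sub_mul, smul_sub]
    rw [polar_Qsig, ← dv_apply, Algebra.smul_def, smul_smul]
    show _ = _
    rw [← Algebra.smul_def, ← Algebra.smul_def, mul_smul_comm, mul_assoc]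
    abel
    


abbrev Ext (n : ℕ) := ExteriorAlgebra ℝ (Fin n → ℝ)

def Eop (n : ℕ) : Ext n →ₗ[ℝ] Ext n :=
  ∑ i : Fin n, (LinearMap.mulLeft ℝ (ExteriorAlgebra.ι ℝ (Pi.single i 1))) ∘ₗ
    (contractLeft (Q := (0 : QuadraticForm ℝ (Fin n → ℝ))) (LinearMap.proj i))

lemma Eop_algebraMap (r : ℝ) : Eop n (algebraMap ℝ _ r) = 0 := by
  simp [Eop, LinearMap.sum_apply]

lemma ext_swap (w v : Fin n → ℝ) :
    ExteriorAlgebra.ι ℝ w * ExteriorAlgebra.ι ℝ v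
      = -(ExteriorAlgebra.ι ℝ v * ExteriorAlgebra.ι ℝ w) := by
  have h := ι_mul_ι_add_swap (Q := (0 : QuadraticForm ℝ (Fin n → ℝ))) w v
  have hp : QuadraticMap.polar (⇑(0 : QuadraticForm ℝ (Fin n → ℝ))) w v = 0 := by
    simp [QuadraticMap.polar]
  rw [hp, map_zero] at h
  exact eq_neg_of_add_eq_zero_left h

lemma Eop_ι_mul (v : Fin n → ℝ) (y : Ext n) :
    Eop n (ExteriorAlgebra.ι ℝ v * y)
      = ExteriorAlgebra.ι ℝ v * y + ExteriorAlgebra.ι ℝ v * Eop n y := by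
  simp only [Eop, LinearMap.sum_apply, LinearMap.comp_apply, LinearMap.mulLeft_apply,
    contractLeft_ι_mul, LinearMap.proj_apply, mul_sub, mul_smul_comm]
  rw [Finset.sum_sub_distrib]
  have h1 : ∑ i : Fin n, v i • (ExteriorAlgebra.ι ℝ (Pi.single i 1) * y)
      = ExteriorAlgebra.ι ℝ v * y := by
    have : ∀ i : Fin n, v i • (ExteriorAlgebra.ι ℝ (Pi.single i 1) * y)
        = (ExteriorAlgebra.ι ℝ (Pi.single i (v i) : Fin n → ℝ)) * y := by
      intro i
      rw [← smul_mul_assoc, ← map_smul]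
      congr 2
      ext j
      by_cases h : j = i <;> simp [h, Pi.single_apply]
    simp_rw [this]
    rw [← Finset.sum_mul, ← map_sum, Finset.univ_sum_single]
  have h2 : ∑ i : Fin n, ExteriorAlgebra.ι ℝ (Pi.single i 1) *
        (ExteriorAlgebra.ι ℝ v * (contractLeft (Q := (0 : QuadraticForm ℝ (Fin n → ℝ)))
          (LinearMap.proj i) y))
      = -(ExteriorAlgebra.ι ℝ v * ∑ i : Fin n, ExteriorAlgebra.ι ℝ (Pi.single i 1) *
          (contractLeft (Q := (0 : QuadraticForm ℝ (Fin n → ℝ))) (LinearMap.proj i) y)) := by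
    rw [Finset.mul_sum, ← Finset.sum_neg_distrib]
    refine Finset.sum_congr rfl fun i _ => ?_
    rw [← mul_assoc, ext_swap, neg_mul, mul_assoc]
  rw [h1, h2, sub_neg_eq_add]

lemma Eop_grade : ∀ (k : ℕ) (x : Ext n), x ∈ (⋀[ℝ]^k (Fin n → ℝ)) → Eop n x = (k : ℝ) • x := by
  intro k
  induction k with
  | zero =>
    intro x hx
    have hx' : x ∈ (LinearMap.range (ExteriorAlgebra.ι ℝ :
        (Fin n → ℝ) →ₗ[ℝ] Ext n)) ^ 0 := hx
    rw [pow_zero, Submodule.one_eq_range] at hx'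
    obtain ⟨r, rfl⟩ := hx'
    simp [Algebra.linearMap_apply, Eop_algebraMap]
  | succ k ih =>
    intro x hx
    have hx' : x ∈ (LinearMap.range (ExteriorAlgebra.ι ℝ :
        (Fin n → ℝ) →ₗ[ℝ] Ext n)) ^ (k + 1) := hx
    rw [pow_succ'] at hx'
    refine Submodule.mul_induction_on hx' ?_ ?_
    · rintro m ⟨v, rfl⟩ y hy
      rw [Eop_ι_mul, ih y hy, mul_smul_comm]
      push_cast
      rw [add_smul, one_smul]
      abel
    · intro a b ha hb
      rw [map_add, ha, hb, smul_add]

lemma exterior_scalar (x : Ext n)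
    (h : ∀ i : Fin n,
      contractLeft (Q := (0 : QuadraticForm ℝ (Fin n → ℝ))) (LinearMap.proj i) x = 0) :
    ∃ r : ℝ, x = algebraMap ℝ _ r := by
  classical
  have hE : Eop n x = 0 := by
    simp only [Eop, LinearMap.sum_apply, LinearMap.comp_apply, h, map_zero, mul_zero,
      LinearMap.mulLeft_apply]
    simp
  set ℰ : ℕ → Submodule ℝ (Ext n) := fun k => ⋀[ℝ]^k (Fin n → ℝ) with hℰ
  have hmem : ∀ k, ((DirectSum.decompose ℰ x k : Ext n)) ∈ ℰ k := fun k => SetLike.coe_mem _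
  have hsum := DirectSum.sum_support_decompose ℰ x
  set s := DFinsupp.support (DirectSum.decompose ℰ x) with hs
  have hEx : (0 : Ext n) = ∑ k ∈ s, (k : ℝ) • (DirectSum.decompose ℰ x k : Ext n) := by
    rw [← hE]
    conv_lhs => rw [← hsum]
    rw [map_sum]
    exact Finset.sum_congr rfl fun k _ => Eop_grade k _ (hmem k)
  have hzero : ∀ j : ℕ, j ≠ 0 → (DirectSum.decompose ℰ x j : Ext n) = 0 := by
    intro j hj
    by_cases hjs : j ∈ s
    · have h0 : ((DirectSum.decompose ℰ
          (∑ k ∈ s, (k : ℝ) • (DirectSum.decompose ℰ x k : Ext n)) j : Ext n)) = 0 := by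
        rw [← hEx]
        simp
      rw [DirectSum.decompose_sum] at h0
      rw [DFinsupp.finset_sum_apply, AddSubmonoidClass.coe_finset_sum] at h0
      have hterm : ∀ k ∈ s, ((DirectSum.decompose ℰ
            ((k : ℝ) • (DirectSum.decompose ℰ x k : Ext n)) j : Ext n))
          = if k = j then (j : ℝ) • (DirectSum.decompose ℰ x j : Ext n) else 0 := by
        intro k _
        have hk : ((k : ℝ) • (DirectSum.decompose ℰ x k : Ext n)) ∈ ℰ k :=
          Submodule.smul_mem _ _ (hmem k)
        by_cases hkj : k = j
        · subst hkj
          rw [if_pos rfl, DirectSum.decompose_of_mem_same ℰ hk]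
        · rw [if_neg hkj, DirectSum.decompose_of_mem_ne ℰ hk hkj]
      rw [Finset.sum_congr rfl hterm, Finset.sum_ite_eq' s j, if_pos hjs] at h0
      have : (j : ℝ) ≠ 0 := Nat.cast_ne_zero.mpr hj
      exact (smul_eq_zero.mp h0).resolve_left this
    · rw [DFinsupp.notMem_support_iff.mp hjs]
      rfl
  have hx0 : x = (DirectSum.decompose ℰ x 0 : Ext n) := by
    conv_lhs => rw [← hsum]
    rw [Finset.sum_eq_single 0]
    · intro k hk hk0
      exact hzero k hk0
    · intro h0s
      rw [DFinsupp.notMem_support_iff.mp h0s]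
      rfl
  have h00 : x ∈ (LinearMap.range (ExteriorAlgebra.ι ℝ :
      (Fin n → ℝ) →ₗ[ℝ] Ext n)) ^ 0 := hx0 ▸ hmem 0
  rw [pow_zero, Submodule.one_eq_range] at h00
  obtain ⟨r, hr⟩ := h00
  exact ⟨r, by rw [← hr]; rfl⟩

lemma ι_Qsig_injective : Function.Injective (ι (Qsig n n)) := by
  intro a b hab
  have h := congrArg (equivExterior (Qsig n n)) hab
  simp only [equivExterior, changeFormEquiv_apply, changeForm_ι] at h
  exact (ExteriorAlgebra.ι_inj ℝ a b).mp h

lemma scalar_of_commute (u : CliffordAlgebra (Qsig n n))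
    (h : ∀ v, ι (Qsig n n) v * u = involute u * ι (Qsig n n) v) :
    ∃ r : ℝ, u = algebraMap ℝ _ r := by
  have hc : ∀ v, contractLeft (Q := Qsig n n) (dv v) u = 0 := by
    intro v
    have h2 := ι_mul_sub_involute v u
    rw [h v, sub_self] at h2
    rcases smul_eq_zero.mp h2.symm with h' | h'
    · norm_num at h'
    · exact h'
  set y := equivExterior (Qsig n n) u with hy
  have hcy : ∀ i : Fin n,
      contractLeft (Q := (0 : QuadraticForm ℝ (Fin n → ℝ))) (LinearMap.proj i) y = 0 := by
    intro i
    have h3 := changeForm_contractLeft (changeForm.associated_neg_proof (Q := Qsig n n))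
      (dv (Pi.single i 1)) u
    rw [hc, map_zero, dv_single] at h3
    rw [hy]
    simp only [equivExterior, changeFormEquiv_apply]
    exact h3.symm
  obtain ⟨r, hr⟩ := exterior_scalar y hcy
  refine ⟨r, ?_⟩
  apply (equivExterior (Qsig n n)).injective
  rw [← hy, hr]
  simp only [equivExterior, changeFormEquiv_apply, changeForm_algebraMap]

abbrev En (n : ℕ) := EuclideanSpace ℝ (Fin n)

def tf (n : ℕ) (f : En n ≃ₗᵢ[ℝ] En n) (v : Fin n → ℝ) : Fin n → ℝ :=
  WithLp.equiv 2 (Fin n → ℝ) (f ((WithLp.equiv 2 (Fin n → ℝ)).symm v))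

lemma tf_one (v : Fin n → ℝ) : tf n 1 v = v := by
  simp [tf]

lemma tf_mul (f g : En n ≃ₗᵢ[ℝ] En n) (v : Fin n → ℝ) :
    tf n (f * g) v = tf n f (tf n g v) := by
  simp [tf, LinearIsometryEquiv.coe_mul]

def Spec (u : (CliffordAlgebra (Qsig n n))ˣ) (f : En n ≃ₗᵢ[ℝ] En n) : Prop :=
  ∀ v : Fin n → ℝ, involute (↑u : CliffordAlgebra (Qsig n n)) * ι (Qsig n n) v
    = ι (Qsig n n) (tf n f v) * ↑u

lemma Spec_of_one {u : (CliffordAlgebra (Qsig n n))ˣ}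
    (hu : (↑u : CliffordAlgebra (Qsig n n)) = 1 ∨ (↑u : CliffordAlgebra (Qsig n n)) = -1) :
    Spec u 1 := by
  intro v
  rcases hu with h | h <;> rw [h] <;> simp [tf_one]

lemma Spec_mul {x y : (CliffordAlgebra (Qsig n n))ˣ} {f g : En n ≃ₗᵢ[ℝ] En n}
    (hf : Spec x f) (hg : Spec y g) : Spec (x * y) (f * g) := by
  intro v
  rw [Units.val_mul, map_mul, mul_assoc, hg v, ← mul_assoc, hf (tf n g v), tf_mul, mul_assoc]

lemma Spec_inv {x : (CliffordAlgebra (Qsig n n))ˣ} {f : En n ≃ₗᵢ[ℝ] En n}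
    (hf : Spec x f) : Spec x⁻¹ f⁻¹ := by
  intro v
  have h1 := hf (tf n f⁻¹ v)
  rw [← tf_mul, mul_inv_cancel, tf_one] at h1
  have hxx : ((↑x⁻¹ : CliffordAlgebra (Qsig n n)) * ↑x) = 1 := by
    rw [← Units.val_mul, inv_mul_cancel, Units.val_one]
  calc involute (↑x⁻¹ : CliffordAlgebra (Qsig n n)) * ι (Qsig n n) v
      = involute (↑x⁻¹ : CliffordAlgebra (Qsig n n)) * ((ι (Qsig n n) v * ↑x) * ↑x⁻¹) := by
        rw [mul_assoc (ι (Qsig n n) v), Units.mul_inv, mul_one]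
    _ = involute (↑x⁻¹ : CliffordAlgebra (Qsig n n))
          * ((involute (↑x : CliffordAlgebra (Qsig n n)) * ι (Qsig n n) (tf n f⁻¹ v)) * ↑x⁻¹) := by
        rw [h1]
    _ = (involute ((↑x⁻¹ : CliffordAlgebra (Qsig n n)) * ↑x))
          * (ι (Qsig n n) (tf n f⁻¹ v) * ↑x⁻¹) := by
        rw [map_mul]; noncomm_ring
    _ = ι (Qsig n n) (tf n f⁻¹ v) * ↑x⁻¹ := by
        rw [hxx, map_one, one_mul]

lemma inner_symm_eq (ξ η : Fin n → ℝ) :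
    ⟪(WithLp.equiv 2 (Fin n → ℝ)).symm ξ, (WithLp.equiv 2 (Fin n → ℝ)).symm η⟫ =
      ∑ i, ξ i * η i := by
  simp [PiLp.inner_apply, RCLike.inner_apply, conj_trivial]
  exact Finset.sum_congr rfl fun i _ => mul_comm _ _

lemma refl_formula (a b : En n) (ha : ⟪a, a⟫ = 1) :
    (reflection (ℝ ∙ a)ᗮ) b = b - (2 * ⟪a, b⟫) • a := by
  have hna : ‖a‖ = 1 := by
    have h := real_inner_self_eq_norm_mul_norm a
    nlinarith [norm_nonneg a]
  rw [reflection_orthogonal_apply, reflection_singleton_apply, hna]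
  push_cast
  rw [one_pow, div_one, two_smul, two_mul, add_smul]
  abel

lemma gen_spec (ξ : Fin n → ℝ) (hξ : Qsig n n ξ = 1) (u : (CliffordAlgebra (Qsig n n))ˣ)
    (hu : (↑u : CliffordAlgebra (Qsig n n)) = ι (Qsig n n) ξ) :
    Spec u (reflection (ℝ ∙ ((WithLp.equiv 2 (Fin n → ℝ)).symm ξ))ᗮ) := by
  intro v
  have htf : tf n (reflection (ℝ ∙ ((WithLp.equiv 2 (Fin n → ℝ)).symm ξ))ᗮ) v
      = v - (2 * ∑ i, ξ i * v i) • ξ := by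
    rw [tf, refl_formula _ _ (by rw [inner_symm_eq, ← Qsig_apply]; exact hξ), inner_symm_eq]
    simp [WithLp.ofLp_sub, WithLp.ofLp_smul]
  rw [hu, htf, involute_ι]
  have hswap := ι_mul_ι_add_swap (Q := Qsig n n) ξ v
  rw [polar_Qsig] at hswap
  rw [map_sub, map_smul, sub_mul, smul_mul_assoc, ι_sq_scalar, hξ, map_one,
    ← Algebra.algebraMap_eq_smul_one, ← hswap]
  abel_nf
  rw [smul_mul_assoc]

lemma Qsig_ne_neg_one (ξ : Fin n → ℝ) : Qsig n n ξ ≠ -1 := by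
  rw [Qsig_apply]
  intro h
  have h0 : (0:ℝ) ≤ ∑ i, ξ i * ξ i := Finset.sum_nonneg fun i _ => mul_self_nonneg _
  linarith

lemma spec_exists {u : (CliffordAlgebra (Qsig n n))ˣ} (hu : u ∈ pinGrp (Qsig n n)) :
    ∃ f, Spec u f := by
  refine Subgroup.closure_induction ?_ ?_ ?_ ?_ hu
  · rintro x ⟨ξ, hx, hξ | hξ⟩
    · exact ⟨_, gen_spec ξ hξ x hx⟩
    · exact absurd hξ (Qsig_ne_neg_one ξ)
  · exact ⟨1, Spec_of_one (Or.inl Units.val_one)⟩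
  · rintro x y hx hy ⟨f, hf⟩ ⟨g, hg⟩
    exact ⟨f * g, Spec_mul hf hg⟩
  · rintro x hx ⟨f, hf⟩
    exact ⟨f⁻¹, Spec_inv hf⟩

lemma Spec_unique {u : (CliffordAlgebra (Qsig n n))ˣ} {f g : En n ≃ₗᵢ[ℝ] En n}
    (hf : Spec u f) (hg : Spec u g) : f = g := by
  have h : ∀ v, tf n f v = tf n g v := by
    intro v
    have h1 : ι (Qsig n n) (tf n f v) * (↑u : CliffordAlgebra (Qsig n n))
        = ι (Qsig n n) (tf n g v) * ↑u := by rw [← hf v, ← hg v]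
    have h2 := congrArg (fun z => z * ((↑u⁻¹ : CliffordAlgebra (Qsig n n)))) h1
    simp only [mul_assoc, Units.mul_inv, mul_one] at h2
    exact ι_Qsig_injective h2
  apply LinearIsometryEquiv.ext
  intro x
  have h3 := h (WithLp.equiv 2 (Fin n → ℝ) x)
  simp only [tf, Equiv.symm_apply_apply] at h3
  exact (WithLp.equiv 2 (Fin n → ℝ)).injective h3

def rho (u : pinGrp (Qsig n n)) : En n ≃ₗᵢ[ℝ] En n := (spec_exists u.2).choose

lemma rho_spec (u : pinGrp (Qsig n n)) : Spec (↑u) (rho u) := (spec_exists u.2).choose_spec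

lemma rho_eq_of_spec (u : pinGrp (Qsig n n)) {f : En n ≃ₗᵢ[ℝ] En n}
    (hf : Spec (↑u) f) : rho u = f := Spec_unique (rho_spec u) hf

def rhoHom : pinGrp (Qsig n n) →* (En n ≃ₗᵢ[ℝ] En n) :=
  MonoidHom.mk' rho (fun a b =>
    rho_eq_of_spec (a * b) (Spec_mul (rho_spec a) (rho_spec b)))

lemma refl_congr {K L : Submodule ℝ (En n)} [HasOrthogonalProjection K]
    [HasOrthogonalProjection L] (h : K = L) : reflection K = reflection L := by
  subst h; rfl

lemma rho_surj : Function.Surjective (rhoHom (n := n)) := by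
  rw [← MonoidHom.range_eq_top]
  have hS : ∀ v : En n, reflection (ℝ ∙ v)ᗮ ∈ (rhoHom (n := n)).range := by
    intro v
    rcases eq_or_ne v 0 with rfl | hv
    · have hb : (ℝ ∙ (0 : En n)) = ⊥ := Submodule.span_zero_singleton ℝ
      have h1 : reflection ((ℝ ∙ (0 : En n))ᗮ) = 1 := by
        rw [refl_congr (L := (⊤ : Submodule ℝ (En n))) (by rw [hb, Submodule.bot_orthogonal_eq_top])]
        apply LinearIsometryEquiv.ext
        intro x
        exact reflection_mem_subspace_eq_self trivial
      rw [h1]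
      exact one_mem _
    · set a : En n := (‖v‖ : ℝ)⁻¹ • v with hadef
      have ha : ‖a‖ = 1 := norm_smul_inv_norm hv
      set ξ : Fin n → ℝ := WithLp.equiv 2 (Fin n → ℝ) a with hξdef
      have hinner : ⟪a, a⟫ = 1 := by
        rw [real_inner_self_eq_norm_mul_norm, ha]; norm_num
      have hQ : Qsig n n ξ = 1 := by
        rw [Qsig_apply]
        rw [← inner_symm_eq (n := n) ξ ξ]
        simpa [hξdef] using hinner
      have hsq : ι (Qsig n n) ξ * ι (Qsig n n) ξ = 1 := by
        rw [ι_sq_scalar, hQ, map_one]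
      set u : (CliffordAlgebra (Qsig n n))ˣ := ⟨ι (Qsig n n) ξ, ι (Qsig n n) ξ, hsq, hsq⟩
        with hudef
      have hmem : u ∈ pinGrp (Qsig n n) := Subgroup.subset_closure ⟨ξ, rfl, Or.inl hQ⟩
      refine ⟨⟨u, hmem⟩, ?_⟩
      have hrho : rho ⟨u, hmem⟩
          = reflection (ℝ ∙ ((WithLp.equiv 2 (Fin n → ℝ)).symm ξ))ᗮ :=
        rho_eq_of_spec _ (gen_spec ξ hQ u rfl)
      show rho ⟨u, hmem⟩ = _
      rw [hrho]
      have hsa : (WithLp.equiv 2 (Fin n → ℝ)).symm ξ = a := Equiv.symm_apply_apply _ _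
      rw [hsa]
      have hspan : (ℝ ∙ a) = (ℝ ∙ v) := by
        rw [hadef]
        exact Submodule.span_singleton_smul_eq
          (IsUnit.mk0 _ (inv_ne_zero (norm_ne_zero_iff.mpr hv))) v
      exact refl_congr (by rw [hspan])
  have hle : Subgroup.closure (Set.range fun v : En n => reflection (ℝ ∙ v)ᗮ)
      ≤ (rhoHom (n := n)).range := by
    rw [Subgroup.closure_le]
    rintro - ⟨v, rfl⟩
    exact hS v
  rw [LinearIsometryEquiv.reflections_generate] at hle
  exact top_le_iff.mp hle

lemma pin_reverse {u : (CliffordAlgebra (Qsig n n))ˣ} (hu : u ∈ pinGrp (Qsig n n)) :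
    reverse (↑u : CliffordAlgebra (Qsig n n)) * ↑u = 1 ∧
      (↑u : CliffordAlgebra (Qsig n n)) * reverse (↑u : CliffordAlgebra (Qsig n n)) = 1 := by
  refine Subgroup.closure_induction ?_ ?_ ?_ ?_ hu
  · rintro x ⟨ξ, hx, hξ | hξ⟩
    · rw [hx, reverse_ι]
      have : ι (Qsig n n) ξ * ι (Qsig n n) ξ = 1 := by rw [ι_sq_scalar, hξ, map_one]
      exact ⟨this, this⟩
    · exact absurd hξ (Qsig_ne_neg_one ξ)
  · simp
  · rintro x y hx hy ⟨hx1, hx2⟩ ⟨hy1, hy2⟩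
    constructor
    · rw [Units.val_mul, reverse.map_mul]
      calc reverse (↑y : CliffordAlgebra (Qsig n n)) * reverse (↑x : CliffordAlgebra (Qsig n n))
            * ((↑x : CliffordAlgebra (Qsig n n)) * ↑y)
          = reverse (↑y : CliffordAlgebra (Qsig n n))
            * (reverse (↑x : CliffordAlgebra (Qsig n n)) * ↑x) * ↑y := by noncomm_ring
        _ = 1 := by rw [hx1, mul_one, hy1]
    · rw [Units.val_mul, reverse.map_mul]
      calc (↑x : CliffordAlgebra (Qsig n n)) * ↑y
            * (reverse (↑y : CliffordAlgebra (Qsig n n)) * reverse (↑x : CliffordAlgebra (Qsig n n)))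
          = (↑x : CliffordAlgebra (Qsig n n))
            * ((↑y : CliffordAlgebra (Qsig n n)) * reverse (↑y : CliffordAlgebra (Qsig n n)))
            * reverse (↑x : CliffordAlgebra (Qsig n n)) := by noncomm_ring
        _ = 1 := by rw [hy2, mul_one, hx2]
  · rintro x hx ⟨h1, h2⟩
    have hrev : reverse (↑x : CliffordAlgebra (Qsig n n)) = ↑x⁻¹ := by
      calc reverse (↑x : CliffordAlgebra (Qsig n n))
          = reverse (↑x : CliffordAlgebra (Qsig n n)) * ((↑x : CliffordAlgebra (Qsig n n)) * ↑x⁻¹) := by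
            rw [Units.mul_inv, mul_one]
        _ = (reverse (↑x : CliffordAlgebra (Qsig n n)) * ↑x) * ↑x⁻¹ := by rw [mul_assoc]
        _ = ↑x⁻¹ := by rw [h1, one_mul]
    have hrevinv : reverse (↑x⁻¹ : CliffordAlgebra (Qsig n n)) = ↑x := by
      rw [← hrev, reverse_reverse]
    rw [hrevinv]
    exact ⟨Units.mul_inv x, Units.inv_mul x⟩

lemma rho_ker (u : pinGrp (Qsig n n)) :
    rhoHom u = 1 ↔
      ((↑(↑u : (CliffordAlgebra (Qsig n n))ˣ) : CliffordAlgebra (Qsig n n)) = 1 ∨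
       (↑(↑u : (CliffordAlgebra (Qsig n n))ˣ) : CliffordAlgebra (Qsig n n)) = -1) := by
  constructor
  · intro h
    have hs : Spec (↑u : (CliffordAlgebra (Qsig n n))ˣ) 1 := by
      have := rho_spec u
      rwa [show rho u = rhoHom u from rfl, h] at this
    have hcomm : ∀ v, ι (Qsig n n) v * (↑(↑u : (CliffordAlgebra (Qsig n n))ˣ))
        = involute (↑(↑u : (CliffordAlgebra (Qsig n n))ˣ) : CliffordAlgebra (Qsig n n))
          * ι (Qsig n n) v := by
      intro v
      have := hs v
      rw [tf_one] at this
      exact this.symm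
    obtain ⟨r, hr⟩ := scalar_of_commute _ hcomm
    have h1 := (pin_reverse u.2).1
    rw [hr, reverse.commutes, ← map_mul] at h1
    have hrr : r * r = 1 := by
      have : algebraMap ℝ (CliffordAlgebra (Qsig n n)) (r * r) = algebraMap ℝ _ 1 := by
        rw [h1, map_one]
      exact (algebraMap ℝ (CliffordAlgebra (Qsig n n))).injective this
    rcases mul_self_eq_one_iff.mp hrr with rfl | rfl
    · left; rw [hr, map_one]
    · right; rw [hr, map_neg, map_one]
  · intro h
    have : rho u = 1 := rho_eq_of_spec u (Spec_of_one h)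
    rw [show rhoHom u = rho u from rfl, this]

lemma rho_reflect (u : pinGrp (Qsig n n)) (ξ : Fin n → ℝ)
    (hu : (↑(↑u : (CliffordAlgebra (Qsig n n))ˣ) : CliffordAlgebra (Qsig n n)) = ι (Qsig n n) ξ)
    (hQ : Qsig n n ξ = 1) (η : Fin n → ℝ) :
    rhoHom u ((WithLp.equiv 2 (Fin n → ℝ)).symm η) =
      (WithLp.equiv 2 (Fin n → ℝ)).symm (η - (2 * ∑ i, ξ i * η i) • ξ) := by
  have hrho : rho u = reflection (ℝ ∙ ((WithLp.equiv 2 (Fin n → ℝ)).symm ξ))ᗮ :=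
    rho_eq_of_spec u (gen_spec ξ hQ _ hu)
  rw [show rhoHom u = rho u from rfl, hrho,
    refl_formula _ _ (by rw [inner_symm_eq, ← Qsig_apply]; exact hQ), inner_symm_eq]
  rfl

end PinCover

/-- **`Pin⁺_n` double covers `O(n)`.**
For `n ≥ 1` there is a surjective group homomorphism `ρ : Pin_{n,0} → O(n)` (the group of
linear isometric automorphisms of Euclidean `ℝⁿ`) sending each generator `ι ξ` with
`Q_{n,0} ξ = 1` to the reflection `η ↦ η - 2⟨ξ,η⟩ξ`, with kernel exactly `{1, -1}`. -/
theorem pinPlus_double_covers_On (n : ℕ) (hn : 1 ≤ n) :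
    ∃ ρ : pinGrp (Qsig n n) →* (EuclideanSpace ℝ (Fin n) ≃ₗᵢ[ℝ] EuclideanSpace ℝ (Fin n)),
      Function.Surjective ρ ∧
      (∀ (u : pinGrp (Qsig n n)) (ξ : Fin n → ℝ),
        ((u : (CliffordAlgebra (Qsig n n))ˣ) : CliffordAlgebra (Qsig n n)) = ι (Qsig n n) ξ →
        Qsig n n ξ = 1 →
        ∀ η : Fin n → ℝ,
          ρ u ((WithLp.equiv 2 (Fin n → ℝ)).symm η) =
            (WithLp.equiv 2 (Fin n → ℝ)).symm (η - (2 * ∑ i, ξ i * η i) • ξ)) ∧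
      (∀ u : pinGrp (Qsig n n),
        ρ u = 1 ↔
          (((u : (CliffordAlgebra (Qsig n n))ˣ) : CliffordAlgebra (Qsig n n)) = 1 ∨
           ((u : (CliffordAlgebra (Qsig n n))ˣ) : CliffordAlgebra (Qsig n n)) = -1)) := by
  refine ⟨PinCover.rhoHom, PinCover.rho_surj, ?_, PinCover.rho_ker⟩
  intro u ξ hu hQ η
  exact PinCover.rho_reflect u ξ hu hQ η
end
end

section
/- Fix n ≥ 1. Let j : ℝⁿ → ℝⁿ⁺¹ be the inclusion x ↦ (x, 0) and let e = (0, …, 0, 1) ∈ ℝⁿ⁺¹, so that Q_{n,1}(j ξ) = Q_{n,0}(ξ) for all ξ ∈ ℝⁿ and Q_{n,1}(e) = −1. Then there is a unique group homomorphism φ : Pin_{n,0} → (Cl_{n,1})ˣ satisfying φ(ι(ξ)) = ι(j ξ) * ι(e) for every ξ ∈ ℝⁿ with Q_{n,0}(ξ) = 1; moreover φ is injective and its image is contained in the Spin group Spin_{n,1}. Thus Pin⁺_n embeds into Spin_{n,1}. -/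
noncomputable section
open CliffordAlgebra

/-- The inverse of a unit whose value lies in the even part of the Clifford algebra
also has value in the even part. -/
theorem unit_inv_mem_evenOdd_zero {V : Type*} [AddCommGroup V] [Module ℝ V]
    {Q : QuadraticForm ℝ V} {u : (CliffordAlgebra Q)ˣ}
    (hu : (↑u : CliffordAlgebra Q) ∈ evenOdd Q 0) :
    (↑u⁻¹ : CliffordAlgebra Q) ∈ evenOdd Q 0 := by
  classical
  set A := evenOdd Q with hA
  set x : CliffordAlgebra Q := (↑u⁻¹ : CliffordAlgebra Q) with hx
  -- decompose x into even and odd parts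
  have huniv : (Finset.univ : Finset (ZMod 2)) = {0, 1} := by decide
  have hsum : ∑ i : ZMod 2, DirectSum.of (fun i => A i) i (DirectSum.decompose A x i)
      = DirectSum.decompose A x := DirectSum.sum_univ_of _
  have hx01 : x = (DirectSum.decompose A x 0 : CliffordAlgebra Q)
      + (DirectSum.decompose A x 1 : CliffordAlgebra Q) := by
    have h := congrArg (DirectSum.decompose A).symm hsum
    rw [Equiv.symm_apply_apply, huniv, Finset.sum_insert (by decide),
      Finset.sum_singleton, DirectSum.decompose_symm_add, DirectSum.decompose_symm_of,
      DirectSum.decompose_symm_of] at h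
    exact h.symm
  have h1 : (1 : CliffordAlgebra Q)
      = ↑u * (DirectSum.decompose A x 0 : CliffordAlgebra Q)
        + ↑u * (DirectSum.decompose A x 1 : CliffordAlgebra Q) := by
    rw [← mul_add, ← hx01, hx, Units.mul_inv]
  have hm0 : ↑u * (DirectSum.decompose A x 0 : CliffordAlgebra Q) ∈ A 0 := by
    simpa using SetLike.mul_mem_graded hu (DirectSum.decompose A x 0).2
  have hm1 : ↑u * (DirectSum.decompose A x 1 : CliffordAlgebra Q) ∈ A 1 := by
    simpa using SetLike.mul_mem_graded hu (DirectSum.decompose A x 1).2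
  have hodd : ↑u * (DirectSum.decompose A x 1 : CliffordAlgebra Q) = 0 := by
    have := congrArg (fun y => (DirectSum.decompose A y 1 : CliffordAlgebra Q)) h1
    simp only [DirectSum.decompose_add, DirectSum.add_apply, Submodule.coe_add] at this
    rw [DirectSum.decompose_of_mem_ne A (SetLike.one_mem_graded A) (by decide : (0 : ZMod 2) ≠ 1),
      DirectSum.decompose_of_mem_ne A hm0 (by decide : (0 : ZMod 2) ≠ 1),
      DirectSum.decompose_of_mem_same A hm1] at this
    simpa using this.symm
  have hd1 : (DirectSum.decompose A x 1 : CliffordAlgebra Q) = 0 := by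
    have := congrArg (fun y => (↑u⁻¹ : CliffordAlgebra Q) * y) hodd
    simpa [← mul_assoc] using this
  rw [hx01, hd1, add_zero]
  exact (DirectSum.decompose A x 0).2

/-- The Spin group of a real quadratic form: the subgroup of the Pin group consisting of
elements whose underlying Clifford algebra element is even. -/
def spinGrp {V : Type*} [AddCommGroup V] [Module ℝ V] (Q : QuadraticForm ℝ V) :
    Subgroup (CliffordAlgebra Q)ˣ where
  carrier := {u | u ∈ pinGrp Q ∧ (↑u : CliffordAlgebra Q) ∈ evenOdd Q 0}
  one_mem' := ⟨one_mem _, SetLike.one_mem_graded _⟩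
  mul_mem' := fun ha hb => ⟨mul_mem ha.1 hb.1, by
    simpa using SetLike.mul_mem_graded ha.2 hb.2⟩
  inv_mem' := fun ha => ⟨inv_mem ha.1, unit_inv_mem_evenOdd_zero ha.2⟩

/-- The inclusion `ℝⁿ → ℝⁿ⁺¹`, `x ↦ (x, 0)`. -/
def jmap (n : ℕ) (x : Fin n → ℝ) : Fin (n + 1) → ℝ := Fin.snoc x 0

/-- The last standard basis vector `e = (0, …, 0, 1) ∈ ℝⁿ⁺¹`. -/
def elast (n : ℕ) : Fin (n + 1) → ℝ := Pi.single (Fin.last n) 1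

namespace PinAux

open CliffordAlgebra.EquivEven

lemma Qsig_snoc (n : ℕ) (x : Fin n → ℝ) (r : ℝ) :
    Qsig (n + 1) n (Fin.snoc x r) = Qsig n n x - r * r := by
  simp only [Qsig, QuadraticMap.weightedSumSquares_apply, Fin.sum_univ_castSucc,
    Fin.snoc_castSucc, Fin.snoc_last, Fin.coe_castSucc, Fin.val_last, lt_irrefl, if_neg,
    lt_self_iff_false, ite_false]
  have h1 : ∀ i : Fin n, (if (i : ℕ) < n then (1 : ℝ) else -1) = 1 := fun i => if_pos i.isLt
  simp only [h1, smul_eq_mul, one_mul, neg_one_mul, neg_smul]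
  ring

lemma elast_eq_snoc (n : ℕ) : elast n = Fin.snoc (0 : Fin n → ℝ) 1 := by
  funext i
  refine Fin.lastCases ?_ (fun j => ?_) i
  · simp [elast, Fin.snoc_last]
  · rw [Fin.snoc_castSucc]
    exact Pi.single_eq_of_ne (Fin.castSucc_lt_last j).ne 1

lemma Qsig_jmap (n : ℕ) (ξ : Fin n → ℝ) : Qsig (n + 1) n (jmap n ξ) = Qsig n n ξ := by
  rw [jmap, Qsig_snoc]; ring

lemma Qsig_elast (n : ℕ) : Qsig (n + 1) n (elast n) = -1 := by
  rw [elast_eq_snoc, Qsig_snoc]; simp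

lemma Qsig_nonneg (n : ℕ) (ξ : Fin n → ℝ) : 0 ≤ Qsig n n ξ := by
  simp only [Qsig, QuadraticMap.weightedSumSquares_apply]
  refine Finset.sum_nonneg fun i _ => ?_
  rw [if_pos i.isLt, smul_eq_mul, one_mul]
  exact mul_self_nonneg _

lemma isOrtho_jmap_elast (n : ℕ) (ξ : Fin n → ℝ) :
    (Qsig (n + 1) n).IsOrtho (jmap n ξ) (elast n) := by
  have hadd : jmap n ξ + elast n = Fin.snoc ξ 1 := by
    funext i
    refine Fin.lastCases ?_ (fun j => ?_) i
    · simp [jmap, elast, Fin.snoc_last]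
    · simp [jmap, elast, Fin.snoc_castSucc, Pi.single_eq_of_ne (Fin.castSucc_lt_last j).ne]
  rw [QuadraticMap.IsOrtho, hadd, Qsig_snoc, Qsig_jmap, Qsig_elast]
  ring

/-- The linear equivalence `(ℝⁿ × ℝ) ≃ ℝⁿ⁺¹` given by `snoc`. -/
def snocLinearEquiv (n : ℕ) : ((Fin n → ℝ) × ℝ) ≃ₗ[ℝ] (Fin (n + 1) → ℝ) where
  toFun p := Fin.snoc p.1 p.2
  invFun y := (Fin.init y, y (Fin.last n))
  map_add' p q := by
    funext i
    refine Fin.lastCases ?_ (fun j => ?_) i <;>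
      simp [Fin.snoc_last, Fin.snoc_castSucc]
  map_smul' c p := by
    funext i
    refine Fin.lastCases ?_ (fun j => ?_) i <;>
      simp [Fin.snoc_last, Fin.snoc_castSucc]
  left_inv p := by simp [Fin.init_snoc, Fin.snoc_last]
  right_inv y := by simp [Fin.snoc_init_self]

/-- The isometry between `Q' (Qsig n n)` and `Qsig (n+1) n`. -/
def snocIsometry (n : ℕ) : (Q' (Qsig n n)).IsometryEquiv (Qsig (n + 1) n) where
  toLinearEquiv := snocLinearEquiv n
  map_app' p := by
    show Qsig (n + 1) n (Fin.snoc p.1 p.2) = _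
    rw [Qsig_snoc, Q'_apply]

/-- The algebra embedding `Cl(n,0) → Cl(n+1,1)` sending `ι ξ ↦ ι (j ξ) * ι e`. -/
def Fmap (n : ℕ) : CliffordAlgebra (Qsig n n) →ₐ[ℝ] CliffordAlgebra (Qsig (n + 1) n) :=
  ((equivOfIsometry (snocIsometry n)).toAlgHom.comp
    ((CliffordAlgebra.even (Q' (Qsig n n))).val.comp (toEven (Qsig n n)))).comp involute

lemma Fmap_injective (n : ℕ) : Function.Injective (Fmap n) := by
  have h1 : Function.Injective (involute (Q := Qsig n n)) :=
    Function.LeftInverse.injective involute_involute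
  have h2 : Function.Injective (toEven (Qsig n n)) :=
    Function.LeftInverse.injective (g := ofEven (Qsig n n))
      (fun x => AlgHom.congr_fun (ofEven_comp_toEven (Qsig n n)) x)
  have h3 : Function.Injective
      ((CliffordAlgebra.even (Q' (Qsig n n))).val : _ →ₐ[ℝ] CliffordAlgebra (Q' (Qsig n n))) :=
    Subtype.val_injective
  have h4 : Function.Injective (equivOfIsometry (snocIsometry n)) :=
    (equivOfIsometry (snocIsometry n)).injective
  exact (((h4.comp h3).comp h2).comp h1 : _)

lemma Fmap_ι (n : ℕ) (ξ : Fin n → ℝ) :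
    Fmap n (ι (Qsig n n) ξ) =
      ι (Qsig (n + 1) n) (jmap n ξ) * ι (Qsig (n + 1) n) (elast n) := by
  have hv : v (Qsig n n) ξ = ι (Q' (Qsig n n)) (ξ, 0) := rfl
  have he0 : e0 (Qsig n n) = ι (Q' (Qsig n n)) ((0 : Fin n → ℝ), 1) := rfl
  have hL1 : (snocIsometry n).toIsometry ((0 : Fin n → ℝ), (1 : ℝ)) = elast n := by
    show Fin.snoc (0 : Fin n → ℝ) 1 = elast n
    exact (elast_eq_snoc n).symm
  have hL2 : (snocIsometry n).toIsometry (ξ, (0 : ℝ)) = jmap n ξ := rfl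
  have h1 : Fmap n (ι (Qsig n n) ξ) = -(equivOfIsometry (snocIsometry n)
      ((toEven (Qsig n n) (ι (Qsig n n) ξ) : CliffordAlgebra (Q' (Qsig n n))))) := by
    simp only [Fmap, AlgHom.comp_apply, involute_ι, map_neg, AlgEquiv.toAlgHom_eq_coe,
      AlgHom.coe_coe, Subalgebra.coe_val, NegMemClass.coe_neg]
    rfl
  rw [h1, toEven_ι, map_mul, he0, hv, equivOfIsometry_apply, equivOfIsometry_apply,
    map_apply_ι, map_apply_ι, hL1, hL2, ι_mul_ι_comm_of_isOrtho (isOrtho_jmap_elast n ξ)]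

lemma Fmap_even (n : ℕ) (x : CliffordAlgebra (Qsig n n)) :
    Fmap n x ∈ evenOdd (Qsig (n + 1) n) 0 := by
  induction x using CliffordAlgebra.induction with
  | algebraMap r => rw [AlgHom.commutes]; exact SetLike.algebraMap_mem_graded _ _
  | ι m => rw [Fmap_ι]; exact ι_mul_ι_mem_evenOdd_zero _ _ _
  | mul a b ha hb => rw [map_mul]; simpa using SetLike.mul_mem_graded ha hb
  | add a b ha hb => rw [map_add]; exact add_mem ha hb

/-- The candidate group homomorphism `Pin(n,0) → (Cl(n+1,1))ˣ`. -/
def φ0 (n : ℕ) : pinGrp (Qsig n n) →* (CliffordAlgebra (Qsig (n + 1) n))ˣ :=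
  (Units.map (Fmap n).toRingHom.toMonoidHom).comp (pinGrp (Qsig n n)).subtype

lemma φ0_coe (n : ℕ) (u : pinGrp (Qsig n n)) :
    ((φ0 n u : (CliffordAlgebra (Qsig (n + 1) n))ˣ) : CliffordAlgebra (Qsig (n + 1) n)) =
      Fmap n ((u : (CliffordAlgebra (Qsig n n))ˣ) : CliffordAlgebra (Qsig n n)) := rfl

end PinAux

open PinAux

/-- **`Pin⁺_n` embeds into `Spin_{n,1}`.**
With `j : ℝⁿ → ℝⁿ⁺¹`, `x ↦ (x,0)` and `e = (0,…,0,1)`, one has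
`Q_{n,1}(j ξ) = Q_{n,0}(ξ)` and `Q_{n,1}(e) = -1`; there is a unique group homomorphism
`φ : Pin_{n,0} → (Cl_{n,1})ˣ` with `φ (ι ξ) = ι (j ξ) * ι e` for all `ξ` with
`Q_{n,0} ξ = 1`, and any such `φ` is injective with image contained in `Spin_{n,1}`. -/
theorem pinPlus_embeds_in_spin_n1 (n : ℕ) (hn : 1 ≤ n) :
    (∀ ξ : Fin n → ℝ, Qsig (n + 1) n (jmap n ξ) = Qsig n n ξ) ∧
    Qsig (n + 1) n (elast n) = -1 ∧
    (∃! φ : pinGrp (Qsig n n) →* (CliffordAlgebra (Qsig (n + 1) n))ˣ,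
      ∀ (u : pinGrp (Qsig n n)) (ξ : Fin n → ℝ),
        ((u : (CliffordAlgebra (Qsig n n))ˣ) : CliffordAlgebra (Qsig n n)) = ι (Qsig n n) ξ →
        Qsig n n ξ = 1 →
        ((φ u : (CliffordAlgebra (Qsig (n + 1) n))ˣ) : CliffordAlgebra (Qsig (n + 1) n)) =
          ι (Qsig (n + 1) n) (jmap n ξ) * ι (Qsig (n + 1) n) (elast n)) ∧
    (∀ φ : pinGrp (Qsig n n) →* (CliffordAlgebra (Qsig (n + 1) n))ˣ,
      (∀ (u : pinGrp (Qsig n n)) (ξ : Fin n → ℝ),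
        ((u : (CliffordAlgebra (Qsig n n))ˣ) : CliffordAlgebra (Qsig n n)) = ι (Qsig n n) ξ →
        Qsig n n ξ = 1 →
        ((φ u : (CliffordAlgebra (Qsig (n + 1) n))ˣ) : CliffordAlgebra (Qsig (n + 1) n)) =
          ι (Qsig (n + 1) n) (jmap n ξ) * ι (Qsig (n + 1) n) (elast n)) →
      Function.Injective φ ∧ ∀ u, φ u ∈ spinGrp (Qsig (n + 1) n)) := by
  classical
  have hφ0 : ∀ (u : pinGrp (Qsig n n)) (ξ : Fin n → ℝ),
      ((u : (CliffordAlgebra (Qsig n n))ˣ) : CliffordAlgebra (Qsig n n)) = ι (Qsig n n) ξ →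
      Qsig n n ξ = 1 →
      ((φ0 n u : (CliffordAlgebra (Qsig (n + 1) n))ˣ) : CliffordAlgebra (Qsig (n + 1) n)) =
        ι (Qsig (n + 1) n) (jmap n ξ) * ι (Qsig (n + 1) n) (elast n) := by
    intro u ξ hval hQ
    rw [φ0_coe, hval, Fmap_ι]
  have huniq : ∀ ψ : pinGrp (Qsig n n) →* (CliffordAlgebra (Qsig (n + 1) n))ˣ,
      (∀ (u : pinGrp (Qsig n n)) (ξ : Fin n → ℝ),
        ((u : (CliffordAlgebra (Qsig n n))ˣ) : CliffordAlgebra (Qsig n n)) = ι (Qsig n n) ξ →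
        Qsig n n ξ = 1 →
        ((ψ u : (CliffordAlgebra (Qsig (n + 1) n))ˣ) : CliffordAlgebra (Qsig (n + 1) n)) =
          ι (Qsig (n + 1) n) (jmap n ξ) * ι (Qsig (n + 1) n) (elast n)) →
      ψ = φ0 n := by
    intro ψ hψ
    refine MonoidHom.ext fun u => ?_
    obtain ⟨x, hx⟩ := u
    refine Subgroup.closure_induction
      (p := fun y hy => ψ ⟨y, hy⟩ = φ0 n ⟨y, hy⟩) ?_ ?_ ?_ ?_ hx
    · intro y hy
      obtain ⟨ξ, h1, h2⟩ := hy
      rcases h2 with h2 | h2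
      · exact Units.ext (by
          rw [hψ ⟨y, Subgroup.subset_closure ⟨ξ, h1, Or.inl h2⟩⟩ ξ h1 h2,
            hφ0 ⟨y, Subgroup.subset_closure ⟨ξ, h1, Or.inl h2⟩⟩ ξ h1 h2])
      · exfalso
        have := Qsig_nonneg n ξ
        rw [h2] at this
        linarith
    · show ψ 1 = φ0 n 1
      rw [map_one, map_one]
    · intro a b ha hb iha ihb
      show ψ (⟨a, ha⟩ * ⟨b, hb⟩) = φ0 n (⟨a, ha⟩ * ⟨b, hb⟩)
      rw [map_mul, map_mul, iha, ihb]
    · intro a ha iha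
      show ψ (⟨a, ha⟩⁻¹) = φ0 n (⟨a, ha⟩⁻¹)
      rw [map_inv, map_inv, iha]
  refine ⟨Qsig_jmap n, Qsig_elast n, ⟨φ0 n, hφ0, huniq⟩, ?_⟩
  intro ψ hψ
  rw [huniq ψ hψ]
  constructor
  · intro a b hab
    have h1 := congrArg Units.val hab
    rw [φ0_coe, φ0_coe] at h1
    exact Subtype.ext (Units.ext (Fmap_injective n h1))
  · intro u
    refine ⟨?_, by rw [φ0_coe]; exact Fmap_even n _⟩
    obtain ⟨x, hx⟩ := u
    show Units.map (Fmap n).toRingHom.toMonoidHom x ∈ pinGrp (Qsig (n + 1) n)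
    refine Subgroup.closure_induction
      (p := fun y _ =>
        Units.map (Fmap n).toRingHom.toMonoidHom y ∈ pinGrp (Qsig (n + 1) n)) ?_ ?_ ?_ ?_ hx
    · intro y hy
      obtain ⟨ξ, h1, h2⟩ := hy
      rcases h2 with h2 | h2
      · have hj : ι (Qsig (n + 1) n) (jmap n ξ) * ι (Qsig (n + 1) n) (jmap n ξ) = 1 := by
          rw [ι_sq_scalar, Qsig_jmap, h2, map_one]
        have he1 : ι (Qsig (n + 1) n) (elast n) * -ι (Qsig (n + 1) n) (elast n) = 1 := by
          rw [mul_neg, ι_sq_scalar, Qsig_elast, map_neg, map_one, neg_neg]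
        have he2 : -ι (Qsig (n + 1) n) (elast n) * ι (Qsig (n + 1) n) (elast n) = 1 := by
          rw [neg_mul, ι_sq_scalar, Qsig_elast, map_neg, map_one, neg_neg]
        set u1 : (CliffordAlgebra (Qsig (n + 1) n))ˣ :=
          ⟨ι (Qsig (n + 1) n) (jmap n ξ), ι (Qsig (n + 1) n) (jmap n ξ), hj, hj⟩ with hu1def
        set u2 : (CliffordAlgebra (Qsig (n + 1) n))ˣ :=
          ⟨ι (Qsig (n + 1) n) (elast n), -ι (Qsig (n + 1) n) (elast n), he1, he2⟩ with hu2def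
        have hu1 : u1 ∈ pinGrp (Qsig (n + 1) n) :=
          Subgroup.subset_closure ⟨jmap n ξ, rfl, Or.inl (by rw [Qsig_jmap, h2])⟩
        have hu2 : u2 ∈ pinGrp (Qsig (n + 1) n) :=
          Subgroup.subset_closure ⟨elast n, rfl, Or.inr (Qsig_elast n)⟩
        have hmap : Units.map (Fmap n).toRingHom.toMonoidHom y = u1 * u2 := by
          refine Units.ext ?_
          show Fmap n (↑y) = ι (Qsig (n + 1) n) (jmap n ξ) * ι (Qsig (n + 1) n) (elast n)
          rw [h1, Fmap_ι]
        rw [hmap]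
        exact mul_mem hu1 hu2
      · exfalso
        have := Qsig_nonneg n ξ
        rw [h2] at this
        linarith
    · show Units.map (Fmap n).toRingHom.toMonoidHom 1 ∈ pinGrp (Qsig (n + 1) n)
      rw [map_one]; exact one_mem _
    · intro a b _ _ iha ihb
      show Units.map (Fmap n).toRingHom.toMonoidHom (a * b) ∈ pinGrp (Qsig (n + 1) n)
      rw [map_mul]; exact mul_mem iha ihb
    · intro a _ iha
      show Units.map (Fmap n).toRingHom.toMonoidHom a⁻¹ ∈ pinGrp (Qsig (n + 1) n)
      rw [map_inv]; exact inv_mem iha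
end
end

section
/- Fix n ≥ 1. Let j : ℝⁿ → ℝⁿ⁺¹ be the inclusion x ↦ (x, 0) and let e = (0, …, 0, 1) ∈ ℝⁿ⁺¹, both viewed inside the positive definite Clifford algebra Cl_{n+1,0}, so that Q_{n+1,0}(j ξ) = −Q_{0,n}(ξ) for all ξ ∈ ℝⁿ and Q_{n+1,0}(e) = 1. Then there is a unique group homomorphism φ : Pin_{0,n} → (Cl_{n+1,0})ˣ satisfying φ(ι(ξ)) = ι(j ξ) * ι(e) for every ξ ∈ ℝⁿ with Q_{0,n}(ξ) = −1; moreover φ is injective and its image is contained in the Spin group Spin_{n+1,0}. Thus Pin⁻_n embeds into Spin_{n+1}. -/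
noncomputable section
open CliffordAlgebra

section Aux

open CliffordAlgebra

variable (n : ℕ)

theorem Qsig_zero_apply (ξ : Fin n → ℝ) :
    Qsig n 0 ξ = ∑ i, -(ξ i * ξ i) := by
  rw [Qsig, QuadraticMap.weightedSumSquares_apply]
  refine Finset.sum_congr rfl fun i _ => ?_
  rw [if_neg (Nat.not_lt_zero _)]
  simp

theorem Qsig_succ (y : Fin (n + 1) → ℝ) :
    Qsig (n + 1) (n + 1) y
      = y (Fin.last n) * y (Fin.last n) - Qsig n 0 (fun i => y i.castSucc) := by
  rw [Qsig, QuadraticMap.weightedSumSquares_apply, Qsig_zero_apply,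
    Fin.sum_univ_castSucc]
  have : ∀ i : Fin (n + 1), (if (i : ℕ) < n + 1 then (1 : ℝ) else -1) = 1 :=
    fun i => if_pos i.isLt
  simp only [this, one_smul]
  rw [Finset.sum_neg_distrib]
  ring

theorem Qsig_zero_nonpos (ξ : Fin n → ℝ) : Qsig n 0 ξ ≤ 0 := by
  rw [Qsig_zero_apply]
  refine Finset.sum_nonpos fun i _ => ?_
  nlinarith [mul_self_nonneg (ξ i)]

theorem jmap_castSucc (ξ : Fin n → ℝ) :
    (fun i : Fin n => jmap n ξ i.castSucc) = ξ :=
  funext fun i => Fin.snoc_castSucc _ _ _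

theorem jmap_last (ξ : Fin n → ℝ) : jmap n ξ (Fin.last n) = 0 :=
  Fin.snoc_last _ _

theorem elast_castSucc :
    (fun i : Fin n => elast n i.castSucc) = (0 : Fin n → ℝ) :=
  funext fun i => Pi.single_eq_of_ne (Fin.castSucc_lt_last i).ne 1

theorem elast_last : elast n (Fin.last n) = 1 := Pi.single_eq_same _ _

theorem Q_jmap (ξ : Fin n → ℝ) :
    Qsig (n + 1) (n + 1) (jmap n ξ) = -(Qsig n 0 ξ) := by
  rw [Qsig_succ, jmap_castSucc, jmap_last]
  ring

theorem Q_elast : Qsig (n + 1) (n + 1) (elast n) = 1 := by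
  rw [Qsig_succ, elast_castSucc, elast_last, QuadraticMap.map_zero]
  ring

end Aux

section Cliff

open CliffordAlgebra

variable (n : ℕ)

theorem ortho_jmap_elast (ξ : Fin n → ℝ) :
    (Qsig (n + 1) (n + 1)).IsOrtho (jmap n ξ) (elast n) := by
  have hsum : jmap n ξ + elast n = Fin.snoc ξ 1 := by
    funext i
    induction i using Fin.lastCases with
    | last => simp [jmap, elast, Fin.snoc_last]
    | cast i => simp [jmap, elast, Fin.snoc_castSucc,
        Pi.single_eq_of_ne (Fin.castSucc_lt_last i).ne]
  show Qsig (n + 1) (n + 1) (jmap n ξ + elast n) = _ + _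
  rw [hsum, Qsig_succ, Q_jmap, Q_elast]
  have h1 : (fun i : Fin n => (Fin.snoc ξ (1:ℝ) : Fin (n+1) → ℝ) i.castSucc) = ξ := by
    funext i; simp
  rw [h1, Fin.snoc_last]
  ring

theorem ortho_elast_jmap (ξ : Fin n → ℝ) :
    (Qsig (n + 1) (n + 1)).IsOrtho (elast n) (jmap n ξ) := by
  have h := ortho_jmap_elast n ξ
  show Qsig (n + 1) (n + 1) (elast n + jmap n ξ) = _ + _
  rw [show elast n + jmap n ξ = jmap n ξ + elast n from add_comm _ _, h, add_comm]

theorem key_sq (ξ : Fin n → ℝ) :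
    ι (Qsig (n + 1) (n + 1)) (jmap n ξ) * ι (Qsig (n + 1) (n + 1)) (elast n)
        * (ι (Qsig (n + 1) (n + 1)) (jmap n ξ) * ι (Qsig (n + 1) (n + 1)) (elast n))
      = algebraMap ℝ _ (Qsig n 0 ξ) := by
  set P := Qsig (n + 1) (n + 1)
  set a := ι P (jmap n ξ)
  set b := ι P (elast n)
  have hswap : b * a = -(a * b) := ι_mul_ι_comm_of_isOrtho (ortho_elast_jmap n ξ)
  have h1 : a * b * (a * b) = -(a * a * (b * b)) := by
    rw [mul_assoc, ← mul_assoc b, hswap]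
    noncomm_ring
  rw [h1, ι_sq_scalar, ι_sq_scalar, Q_jmap, Q_elast, ← map_mul, ← map_neg]
  ring_nf

/-- The inclusion `ℝⁿ → ℝⁿ⁺¹` as a linear map. -/
def jlin : (Fin n → ℝ) →ₗ[ℝ] (Fin (n + 1) → ℝ) :=
  LinearMap.pi (Fin.lastCases 0 LinearMap.proj)

theorem jlin_apply (ξ : Fin n → ℝ) : jlin n ξ = jmap n ξ := by
  funext i
  induction i using Fin.lastCases with
  | last => simp [jlin, jmap, Fin.snoc_last]
  | cast i => simp [jlin, jmap, Fin.snoc_castSucc]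

/-- The algebra embedding `Cl(Q_{0,n}) → even Cl(Q_{n+1,0})`. -/
def toE : CliffordAlgebra (Qsig n 0) →ₐ[ℝ] even (Qsig (n + 1) (n + 1)) := by
  refine CliffordAlgebra.lift _ ⟨?_, fun m => ?_⟩
  · refine LinearMap.codRestrict _
      ((LinearMap.mulRight ℝ (ι (Qsig (n + 1) (n + 1)) (elast n))).comp
        ((ι (Qsig (n + 1) (n + 1))) ∘ₗ jlin n)) fun m => ?_
    show _ ∈ evenOdd _ 0
    simp only [LinearMap.comp_apply, LinearMap.mulRight_apply]
    exact ι_mul_ι_mem_evenOdd_zero _ _ _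
  · ext1
    rw [Subalgebra.coe_mul]
    erw [LinearMap.codRestrict_apply]
    simp only [LinearMap.comp_apply, LinearMap.mulRight_apply, jlin_apply]
    rw [key_sq]
    rfl

theorem toE_ι (ξ : Fin n → ℝ) :
    (toE n (ι (Qsig n 0) ξ) : CliffordAlgebra (Qsig (n + 1) (n + 1)))
      = ι (Qsig (n + 1) (n + 1)) (jmap n ξ) * ι (Qsig (n + 1) (n + 1)) (elast n) := by
  rw [toE]
  erw [CliffordAlgebra.lift_ι_apply]
  erw [LinearMap.codRestrict_apply]
  simp [jlin_apply]

end Cliff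

section OfE

open CliffordAlgebra

variable (n : ℕ)

/-- The bilinear map underlying the inverse `even Cl(Q_{n+1,0}) → Cl(Q_{0,n})`. -/
def fbil : (Fin (n + 1) → ℝ) →ₗ[ℝ] (Fin (n + 1) → ℝ) →ₗ[ℝ] CliffordAlgebra (Qsig n 0) :=
  ((Algebra.lmul ℝ (CliffordAlgebra (Qsig n 0))).toLinearMap.comp <|
      (ι (Qsig n 0)).comp (LinearMap.funLeft ℝ ℝ Fin.castSucc) +
        (Algebra.linearMap ℝ _).comp (LinearMap.proj (Fin.last n))).compl₂
    ((Algebra.linearMap ℝ _).comp (LinearMap.proj (Fin.last n)) -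
      (ι (Qsig n 0)).comp (LinearMap.funLeft ℝ ℝ Fin.castSucc))

theorem fbil_apply (y z : Fin (n + 1) → ℝ) :
    fbil n y z = (ι (Qsig n 0) (fun i => y i.castSucc) + algebraMap ℝ _ (y (Fin.last n)))
      * (algebraMap ℝ _ (z (Fin.last n)) - ι (Qsig n 0) (fun i => z i.castSucc)) := rfl

/-- The `EvenHom` structure on `fbil`. -/
def fEvenHom : EvenHom (Qsig (n + 1) (n + 1)) (CliffordAlgebra (Qsig n 0)) where
  bilin := fbil n
  contract m := by
    rw [fbil_apply]
    set a := ι (Qsig n 0) (fun i => m i.castSucc)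
    set s := algebraMap ℝ (CliffordAlgebra (Qsig n 0)) (m (Fin.last n))
    have hc : Commute s a := Algebra.commutes _ _
    calc (a + s) * (s - a) = (s + a) * (s - a) := by rw [add_comm]
      _ = s * s - a * a := hc.mul_self_sub_mul_self_eq.symm
      _ = algebraMap ℝ _ (m (Fin.last n) * m (Fin.last n) - Qsig n 0 (fun i => m i.castSucc)) := by
          rw [ι_sq_scalar, ← map_mul, ← map_sub]
      _ = algebraMap ℝ _ (Qsig (n + 1) (n + 1) m) := by rw [Qsig_succ]
  contract_mid m₁ m₂ m₃ := by
    rw [fbil_apply, fbil_apply, fbil_apply]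
    set a := ι (Qsig n 0) (fun i => m₁ i.castSucc)
    set b := ι (Qsig n 0) (fun i => m₂ i.castSucc)
    set c := ι (Qsig n 0) (fun i => m₃ i.castSucc)
    set s₁ := algebraMap ℝ (CliffordAlgebra (Qsig n 0)) (m₁ (Fin.last n))
    set s₂ := algebraMap ℝ (CliffordAlgebra (Qsig n 0)) (m₂ (Fin.last n))
    set s₃ := algebraMap ℝ (CliffordAlgebra (Qsig n 0)) (m₃ (Fin.last n))
    have hc : Commute s₂ b := Algebra.commutes _ _
    have mid : (s₂ - b) * (b + s₂) = algebraMap ℝ _ (Qsig (n + 1) (n + 1) m₂) := by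
      rw [show b + s₂ = s₂ + b from add_comm _ _, ← hc.mul_self_sub_mul_self_eq',
        ι_sq_scalar, ← map_mul, ← map_sub, Qsig_succ]
    calc (a + s₁) * (s₂ - b) * ((b + s₂) * (s₃ - c))
        = (a + s₁) * ((s₂ - b) * (b + s₂) * (s₃ - c)) := by
          rw [mul_assoc, mul_assoc]
      _ = (a + s₁) * (algebraMap ℝ _ (Qsig (n + 1) (n + 1) m₂) * (s₃ - c)) := by rw [mid]
      _ = Qsig (n + 1) (n + 1) m₂ • ((a + s₁) * (s₃ - c)) := by
          rw [← Algebra.smul_def, mul_smul_comm]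

/-- The inverse algebra map. -/
def ofE : even (Qsig (n + 1) (n + 1)) →ₐ[ℝ] CliffordAlgebra (Qsig n 0) :=
  even.lift _ (fEvenHom n)

theorem ofE_toE : (ofE n).comp (toE n) = AlgHom.id ℝ _ := by
  refine CliffordAlgebra.hom_ext (LinearMap.ext fun ξ => ?_)
  have h1 : toE n (ι (Qsig n 0) ξ)
      = (even.ι (Qsig (n + 1) (n + 1))).bilin (jmap n ξ) (elast n) := by
    refine Subtype.ext ?_
    rw [toE_ι]
    rfl
  show ofE n (toE n (ι (Qsig n 0) ξ)) = _
  rw [h1, ofE, even.lift_ι]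
  show fbil n (jmap n ξ) (elast n) = _
  rw [fbil_apply, jmap_castSucc, jmap_last, elast_castSucc, elast_last]
  simp

theorem toE_injective : Function.Injective (toE n) := fun x y h => by
  have hx := AlgHom.congr_fun (ofE_toE n) x
  have hy := AlgHom.congr_fun (ofE_toE n) y
  simp only [AlgHom.comp_apply, AlgHom.id_apply] at hx hy
  rw [← hx, ← hy, h]

/-- The composite embedding `Cl(Q_{0,n}) → Cl(Q_{n+1,0})`. -/
def Fhom : CliffordAlgebra (Qsig n 0) →ₐ[ℝ] CliffordAlgebra (Qsig (n + 1) (n + 1)) :=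
  ((even (Qsig (n + 1) (n + 1))).val).comp (toE n)

theorem Fhom_ι (ξ : Fin n → ℝ) :
    Fhom n (ι (Qsig n 0) ξ)
      = ι (Qsig (n + 1) (n + 1)) (jmap n ξ) * ι (Qsig (n + 1) (n + 1)) (elast n) := by
  rw [Fhom, AlgHom.comp_apply, Subalgebra.coe_val, toE_ι]

theorem Fhom_injective : Function.Injective (Fhom n) := by
  intro x y h
  exact toE_injective n (Subtype.ext h)

end OfE

section Grp

open CliffordAlgebra

/-- A vector of unit square gives a unit of the Clifford algebra. -/
def ιUnit {V : Type*} [AddCommGroup V] [Module ℝ V] (Q : QuadraticForm ℝ V) (a : V)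
    (h : Q a = 1) : (CliffordAlgebra Q)ˣ :=
  ⟨ι Q a, ι Q a, by rw [ι_sq_scalar, h, map_one], by rw [ι_sq_scalar, h, map_one]⟩

/-- Two homomorphisms out of a Pin group agreeing on the generating reflections are equal. -/
theorem pin_hom_ext {V : Type*} [AddCommGroup V] [Module ℝ V] {Q : QuadraticForm ℝ V}
    {H : Type*} [Group H] {φ ψ : pinGrp Q →* H}
    (h : ∀ u : pinGrp Q, ((u : (CliffordAlgebra Q)ˣ) ∈
      {u : (CliffordAlgebra Q)ˣ | ∃ ξ : V, (↑u : CliffordAlgebra Q) = ι Q ξ ∧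
        (Q ξ = 1 ∨ Q ξ = -1)}) → φ u = ψ u) : φ = ψ := by
  refine MonoidHom.ext fun u => ?_
  have hu : u ∈ Subgroup.closure
      (((↑) : pinGrp Q → (CliffordAlgebra Q)ˣ) ⁻¹'
        {u : (CliffordAlgebra Q)ˣ | ∃ ξ : V, (↑u : CliffordAlgebra Q) = ι Q ξ ∧
          (Q ξ = 1 ∨ Q ξ = -1)}) := by
    erw [Subgroup.closure_closure_coe_preimage]
    exact Subgroup.mem_top u
  refine Subgroup.closure_induction (p := fun g _ => φ g = ψ g) ?_ ?_ ?_ ?_ hu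
  · intro x hx; exact h x hx
  · show φ 1 = ψ 1
    rw [map_one, map_one]
  · intro x y _ _ hx hy; rw [map_mul, map_mul, hx, hy]
  · intro x _ hx; rw [map_inv, map_inv, hx]

variable (n : ℕ)

/-- The candidate homomorphism `Pin⁻_n → (Cl_{n+1,0})ˣ`. -/
def φ0 : pinGrp (Qsig n 0) →* (CliffordAlgebra (Qsig (n + 1) (n + 1)))ˣ :=
  (Units.map (Fhom n).toMonoidHom).comp (pinGrp (Qsig n 0)).subtype

/-- The defining property of the embedding. -/
def PhiSpec (φ : pinGrp (Qsig n 0) →* (CliffordAlgebra (Qsig (n + 1) (n + 1)))ˣ) : Prop :=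
  ∀ (u : pinGrp (Qsig n 0)) (ξ : Fin n → ℝ),
    ((u : (CliffordAlgebra (Qsig n 0))ˣ) : CliffordAlgebra (Qsig n 0)) = ι (Qsig n 0) ξ →
    Qsig n 0 ξ = -1 →
    ((φ u : (CliffordAlgebra (Qsig (n + 1) (n + 1)))ˣ) :
        CliffordAlgebra (Qsig (n + 1) (n + 1))) =
      ι (Qsig (n + 1) (n + 1)) (jmap n ξ) * ι (Qsig (n + 1) (n + 1)) (elast n)

theorem φ0_coe (u : pinGrp (Qsig n 0)) :
    ((φ0 n u : (CliffordAlgebra (Qsig (n + 1) (n + 1)))ˣ) :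
        CliffordAlgebra (Qsig (n + 1) (n + 1)))
      = Fhom n ((u : (CliffordAlgebra (Qsig n 0))ˣ) : CliffordAlgebra (Qsig n 0)) := rfl

theorem φ0_spec (u : pinGrp (Qsig n 0)) (ξ : Fin n → ℝ)
    (h : ((u : (CliffordAlgebra (Qsig n 0))ˣ) : CliffordAlgebra (Qsig n 0)) = ι (Qsig n 0) ξ) :
    ((φ0 n u : (CliffordAlgebra (Qsig (n + 1) (n + 1)))ˣ) :
        CliffordAlgebra (Qsig (n + 1) (n + 1)))
      = ι (Qsig (n + 1) (n + 1)) (jmap n ξ) * ι (Qsig (n + 1) (n + 1)) (elast n) := by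
  rw [φ0_coe, h, Fhom_ι]

theorem neg_one_of_gen {ξ : Fin n → ℝ} (h : Qsig n 0 ξ = 1 ∨ Qsig n 0 ξ = -1) :
    Qsig n 0 ξ = -1 := by
  rcases h with h | h
  · exfalso; have := Qsig_zero_nonpos n ξ; linarith
  · exact h

theorem φ0_injective : Function.Injective (φ0 n) := by
  intro u v h
  apply Subtype.ext
  apply Units.ext
  apply Fhom_injective n
  have h2 := congrArg Units.val h
  rw [φ0_coe, φ0_coe] at h2
  exact h2

theorem φ0_mem_spin (u : pinGrp (Qsig n 0)) : φ0 n u ∈ spinGrp (Qsig (n + 1) (n + 1)) := by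
  have hmem : (u : (CliffordAlgebra (Qsig n 0))ˣ) ∈ pinGrp (Qsig n 0) := u.2
  show Units.map (Fhom n).toMonoidHom ↑u ∈ spinGrp (Qsig (n + 1) (n + 1))
  refine Subgroup.closure_induction
    (p := fun g _ => Units.map (Fhom n).toMonoidHom g ∈ spinGrp (Qsig (n + 1) (n + 1)))
    ?_ ?_ ?_ ?_ hmem
  · intro x hx
    obtain ⟨ξ, hval, hQ⟩ := hx
    have hQ' : Qsig n 0 ξ = -1 := neg_one_of_gen n hQ
    have hj : Qsig (n + 1) (n + 1) (jmap n ξ) = 1 := by rw [Q_jmap, hQ']; ring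
    have hcoe : (↑(Units.map (Fhom n).toMonoidHom x) :
        CliffordAlgebra (Qsig (n + 1) (n + 1)))
        = ι (Qsig (n + 1) (n + 1)) (jmap n ξ) * ι (Qsig (n + 1) (n + 1)) (elast n) := by
      show Fhom n ↑x = _
      rw [hval, Fhom_ι]
    refine ⟨?_, ?_⟩
    · have hx1 : Units.map (Fhom n).toMonoidHom x
          = ιUnit _ (jmap n ξ) hj * ιUnit _ (elast n) (Q_elast n) :=
        Units.ext (by rw [hcoe]; rfl)
      rw [hx1]
      exact mul_mem
        (Subgroup.subset_closure ⟨jmap n ξ, rfl, Or.inl hj⟩)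
        (Subgroup.subset_closure ⟨elast n, rfl, Or.inl (Q_elast n)⟩)
    · show (↑(Units.map (Fhom n).toMonoidHom x) :
        CliffordAlgebra (Qsig (n + 1) (n + 1))) ∈ evenOdd _ 0
      rw [hcoe]
      exact ι_mul_ι_mem_evenOdd_zero _ _ _
  · show Units.map (Fhom n).toMonoidHom 1 ∈ spinGrp (Qsig (n + 1) (n + 1))
    rw [map_one]; exact one_mem _
  · intro x y _ _ hx hy; rw [map_mul]; exact mul_mem hx hy
  · intro x _ hx; rw [map_inv]; exact inv_mem hx

theorem φ_unique (φ : pinGrp (Qsig n 0) →* (CliffordAlgebra (Qsig (n + 1) (n + 1)))ˣ)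
    (hφ : PhiSpec n φ) : φ = φ0 n := by
  apply pin_hom_ext
  intro u hu
  obtain ⟨ξ, hval, hQ⟩ := hu
  exact Units.ext ((hφ u ξ hval (neg_one_of_gen n hQ)).trans (φ0_spec n u ξ hval).symm)

end Grp

/-- **`Pin⁻_n` embeds into `Spin_{n+1}`.**
With `j : ℝⁿ → ℝⁿ⁺¹`, `x ↦ (x,0)` and `e = (0,…,0,1)` viewed inside the positive definite
Clifford algebra `Cl_{n+1,0}`, one has `Q_{n+1,0}(j ξ) = -Q_{0,n}(ξ)` and `Q_{n+1,0}(e) = 1`;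
there is a unique group homomorphism `φ : Pin_{0,n} → (Cl_{n+1,0})ˣ` with
`φ (ι ξ) = ι (j ξ) * ι e` for all `ξ` with `Q_{0,n} ξ = -1`, and any such `φ` is injective
with image contained in `Spin_{n+1,0}`. -/
theorem pinMinus_embeds_in_spin_succ (n : ℕ) (hn : 1 ≤ n) :
    (∀ ξ : Fin n → ℝ, Qsig (n + 1) (n + 1) (jmap n ξ) = -(Qsig n 0 ξ)) ∧
    Qsig (n + 1) (n + 1) (elast n) = 1 ∧
    (∃! φ : pinGrp (Qsig n 0) →* (CliffordAlgebra (Qsig (n + 1) (n + 1)))ˣ,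
      ∀ (u : pinGrp (Qsig n 0)) (ξ : Fin n → ℝ),
        ((u : (CliffordAlgebra (Qsig n 0))ˣ) : CliffordAlgebra (Qsig n 0)) = ι (Qsig n 0) ξ →
        Qsig n 0 ξ = -1 →
        ((φ u : (CliffordAlgebra (Qsig (n + 1) (n + 1)))ˣ) :
            CliffordAlgebra (Qsig (n + 1) (n + 1))) =
          ι (Qsig (n + 1) (n + 1)) (jmap n ξ) * ι (Qsig (n + 1) (n + 1)) (elast n)) ∧
    (∀ φ : pinGrp (Qsig n 0) →* (CliffordAlgebra (Qsig (n + 1) (n + 1)))ˣ,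
      (∀ (u : pinGrp (Qsig n 0)) (ξ : Fin n → ℝ),
        ((u : (CliffordAlgebra (Qsig n 0))ˣ) : CliffordAlgebra (Qsig n 0)) = ι (Qsig n 0) ξ →
        Qsig n 0 ξ = -1 →
        ((φ u : (CliffordAlgebra (Qsig (n + 1) (n + 1)))ˣ) :
            CliffordAlgebra (Qsig (n + 1) (n + 1))) =
          ι (Qsig (n + 1) (n + 1)) (jmap n ξ) * ι (Qsig (n + 1) (n + 1)) (elast n)) →
      Function.Injective φ ∧ ∀ u, φ u ∈ spinGrp (Qsig (n + 1) (n + 1))) := by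
  
  refine ⟨Q_jmap n, Q_elast n,
    ⟨φ0 n, fun u ξ h _ => φ0_spec n u ξ h, fun φ hφ => φ_unique n φ hφ⟩,
    fun φ hφ => ?_⟩
  have h := φ_unique n φ hφ
  subst h
  exact ⟨φ0_injective n, φ0_mem_spin n⟩
end
end

section
/- The Spin group Spin_2 = Spin_{0,2}, the subgroup of even elements of the Pin group of the negative definite quadratic form Q_{0,2}(x) = −x₁² − x₂² on ℝ², is isomorphic as a group to the circle group 𝕋 (the multiplicative group of complex numbers of absolute value 1). -/
noncomputable section
open CliffordAlgebra

namespace SpinTwoAux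

abbrev Q2 : QuadraticForm ℝ (Fin 2 → ℝ) := Qsig 2 0

lemma Q2_apply (x : Fin 2 → ℝ) : Q2 x = -(x 0 * x 0) - x 1 * x 1 := by
  simp [Q2, Qsig, QuadraticMap.weightedSumSquares_apply, Fin.sum_univ_two]
  ring

def v0 : Fin 2 → ℝ := Pi.single 0 1
def v1 : Fin 2 → ℝ := Pi.single 1 1

@[simp] lemma v0_0 : v0 0 = 1 := rfl
@[simp] lemma v0_1 : v0 1 = 0 := rfl
@[simp] lemma v1_0 : v1 0 = 0 := rfl
@[simp] lemma v1_1 : v1 1 = 1 := rfl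

def e0 : CliffordAlgebra Q2 := ι Q2 v0
def e1 : CliffordAlgebra Q2 := ι Q2 v1

lemma Q2_v0 : Q2 v0 = -1 := by rw [Q2_apply]; simp
lemma Q2_v1 : Q2 v1 = -1 := by rw [Q2_apply]; simp

lemma e0_sq : e0 * e0 = -1 := by
  rw [e0, ι_sq_scalar, Q2_v0, map_neg, map_one]

lemma e1_sq : e1 * e1 = -1 := by
  rw [e1, ι_sq_scalar, Q2_v1, map_neg, map_one]

lemma polar_Q2 (a b : Fin 2 → ℝ) :
    QuadraticMap.polar (⇑Q2) a b = -(2 * (a 0 * b 0 + a 1 * b 1)) := by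
  simp only [QuadraticMap.polar, Q2_apply, Pi.add_apply]
  ring

lemma e1_mul_e0 : e1 * e0 = -(e0 * e1) := by
  have h := ι_mul_ι_add_swap (Q := Q2) v0 v1
  rw [polar_Q2] at h
  simp only [v0_0, v0_1, v1_0, v1_1] at h
  norm_num at h
  rw [← e0, ← e1] at h
  linear_combination (norm := noncomm_ring) h

def ω : CliffordAlgebra Q2 := e0 * e1

lemma ω_sq : ω * ω = -1 := by
  have h1 : (e0 * e1) * (e0 * e1) = e0 * (e1 * e0) * e1 := by noncomm_ring
  rw [ω, h1, e1_mul_e0]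
  have h2 : e0 * -(e0 * e1) * e1 = -((e0 * e0) * (e1 * e1)) := by noncomm_ring
  rw [h2, e0_sq, e1_sq]
  norm_num

def L : ℂ →ₐ[ℝ] CliffordAlgebra Q2 := Complex.liftAux ω ω_sq

lemma L_apply (z : ℂ) : L z = algebraMap ℝ _ z.re + z.im • ω :=
  Complex.liftAux_apply ω ω_sq z

lemma ι_decomp (a : Fin 2 → ℝ) : ι Q2 a = a 0 • e0 + a 1 • e1 := by
  have h : a = a 0 • v0 + a 1 • v1 := by
    funext i
    fin_cases i <;> simp [v0, v1]
  rw [e0, e1, ← map_smul, ← map_smul, ← map_add, ← h]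

lemma mul_ι (a b : Fin 2 → ℝ) :
    ι Q2 a * ι Q2 b =
      algebraMap ℝ _ (-(a 0 * b 0 + a 1 * b 1)) + (a 0 * b 1 - a 1 * b 0) • ω := by
  rw [ι_decomp a, ι_decomp b, Algebra.algebraMap_eq_smul_one]
  simp only [mul_add, add_mul, smul_mul_assoc, mul_smul_comm, smul_smul, e1_mul_e0,
    e0_sq, e1_sq, ω, smul_neg]
  module

lemma L_even (z : ℂ) : L z ∈ evenOdd Q2 0 := by
  rw [L_apply]
  refine add_mem ?_ (Submodule.smul_mem _ _ ?_)
  · exact SetLike.algebraMap_mem_graded _ _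
  · have := SetLike.mul_mem_graded (ι_mem_evenOdd_one Q2 v0) (ι_mem_evenOdd_one Q2 v1)
    simpa [ω, e0, e1, (by decide : (1 + 1 : ZMod 2) = 0)] using this

def circ (a b : ℝ) (h : a * a + b * b = 1) : Circle :=
  ⟨⟨a, b⟩, by
    have h2 : ‖(⟨a, b⟩ : ℂ)‖ = 1 := by
      rw [Complex.norm_def, Complex.normSq_mk, h, Real.sqrt_one]
    simpa [Submonoid.unitSphere, mem_sphere_zero_iff_norm] using h2⟩

@[simp] lemma circ_re (a b : ℝ) (h) : ((circ a b h : Circle) : ℂ).re = a := rfl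
@[simp] lemma circ_im (a b : ℝ) (h) : ((circ a b h : Circle) : ℂ).im = b := rfl

def gen (ξ : Fin 2 → ℝ) (h : Q2 ξ = -1) : (CliffordAlgebra Q2)ˣ :=
  ⟨ι Q2 ξ, -ι Q2 ξ,
    by rw [mul_neg, ι_sq_scalar, h, map_neg, map_one, neg_neg],
    by rw [neg_mul, ι_sq_scalar, h, map_neg, map_one, neg_neg]⟩

@[simp] lemma gen_val (ξ h) : (↑(gen ξ h) : CliffordAlgebra Q2) = ι Q2 ξ := rfl
@[simp] lemma gen_inv_val (ξ h) : (↑(gen ξ h)⁻¹ : CliffordAlgebra Q2) = -(ι Q2 ξ) := rfl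

lemma gen_mem_pin (ξ h) : gen ξ h ∈ pinGrp Q2 :=
  Subgroup.subset_closure ⟨ξ, rfl, Or.inr h⟩

def φ : Circle →* (CliffordAlgebra Q2)ˣ :=
  (Units.map L.toRingHom.toMonoidHom).comp Circle.toUnits

@[simp] lemma φ_val (z : Circle) : (↑(φ z) : CliffordAlgebra Q2) = L ↑z := rfl

lemma φ_injective : Function.Injective φ := by
  have hL : Function.Injective L := L.toRingHom.injective
  have h1 : Function.Injective (Units.map L.toRingHom.toMonoidHom) := Units.map_injective hL
  have h2 : Function.Injective Circle.toUnits := by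
    intro a b h
    ext
    have := congrArg (fun u : ℂˣ => (u : ℂ)) h
    simpa using this
  exact h1.comp h2

lemma prod_eq_φ (a b : Fin 2 → ℝ) (ha : Q2 a = -1) (hb : Q2 b = -1) :
    ∃ z : Circle, gen a ha * gen b hb = φ z ∧
      (z : ℂ).re = -(a 0 * b 0 + a 1 * b 1) ∧ (z : ℂ).im = a 0 * b 1 - a 1 * b 0 := by
  have ha' : a 0 * a 0 + a 1 * a 1 = 1 := by have h := Q2_apply a; rw [ha] at h; linarith
  have hb' : b 0 * b 0 + b 1 * b 1 = 1 := by have h := Q2_apply b; rw [hb] at h; linarith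
  have key : (-(a 0 * b 0 + a 1 * b 1)) * (-(a 0 * b 0 + a 1 * b 1))
      + (a 0 * b 1 - a 1 * b 0) * (a 0 * b 1 - a 1 * b 0)
      = (a 0 * a 0 + a 1 * a 1) * (b 0 * b 0 + b 1 * b 1) := by ring
  refine ⟨circ (-(a 0 * b 0 + a 1 * b 1)) (a 0 * b 1 - a 1 * b 0)
    (by rw [key, ha', hb', mul_one]), ?_, rfl, rfl⟩
  ext
  rw [Units.val_mul, gen_val, gen_val, mul_ι, φ_val, L_apply]
  rfl

lemma even_odd_zero {x : CliffordAlgebra Q2} (h0 : x ∈ evenOdd Q2 0)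
    (h1 : x ∈ evenOdd Q2 1) : x = 0 := by
  have hs := DirectSum.decompose_of_mem_same (evenOdd Q2) h0
  have hn := DirectSum.decompose_of_mem_ne (evenOdd Q2) h1 (by decide : (1 : ZMod 2) ≠ 0)
  rw [← hs, hn]

def g0 : (CliffordAlgebra Q2)ˣ := gen v0 Q2_v0

@[simp] lemma g0_val : (↑g0 : CliffordAlgebra Q2) = e0 := rfl
@[simp] lemma g0_inv_val : (↑g0⁻¹ : CliffordAlgebra Q2) = -e0 := rfl

lemma e0_ω_e0 : e0 * ω * e0 = ω := by
  have h1 : e0 * ω * e0 = (e0 * e0) * (e1 * e0) := by rw [ω]; noncomm_ring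
  rw [h1, e0_sq, e1_mul_e0, ω]
  noncomm_ring

lemma e0_L_e0 (z : ℂ) : e0 * L z * e0 = -(L ((starRingEnd ℂ) z)) := by
  rw [L_apply, L_apply, Algebra.algebraMap_eq_smul_one, Algebra.algebraMap_eq_smul_one]
  simp only [Complex.conj_re, Complex.conj_im]
  simp only [mul_add, add_mul, mul_smul_comm, smul_mul_assoc, mul_one, one_mul,
    e0_sq, e0_ω_e0]
  module

lemma conj_g0_left (z : Circle) : g0 * φ z * g0⁻¹ = φ z⁻¹ := by
  ext
  rw [Units.val_mul, Units.val_mul, φ_val, φ_val, Circle.coe_inv_eq_conj,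
    g0_val, g0_inv_val, mul_neg, e0_L_e0, neg_neg]

lemma conj_g0_right (z : Circle) : g0⁻¹ * φ z * g0 = φ z⁻¹ := by
  ext
  rw [Units.val_mul, Units.val_mul, φ_val, φ_val, Circle.coe_inv_eq_conj,
    g0_val, g0_inv_val, neg_mul, neg_mul, e0_L_e0, neg_neg]

lemma conj_r {u : (CliffordAlgebra Q2)ˣ} (h : u ∈ φ.range) : g0⁻¹ * u * g0 ∈ φ.range := by
  obtain ⟨z, rfl⟩ := h
  exact ⟨z⁻¹, (conj_g0_right z).symm⟩

def negOne : Circle := circ (-1) 0 (by norm_num)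

lemma g0_sq : g0 * g0 = φ negOne := by
  ext
  rw [Units.val_mul, g0_val, e0_sq, φ_val, L_apply]
  show _ = algebraMap ℝ _ (-1 : ℝ) + (0 : ℝ) • ω
  rw [map_neg, map_one, zero_smul, add_zero]

lemma pin_cases {u : (CliffordAlgebra Q2)ˣ} (hu : u ∈ pinGrp Q2) :
    u ∈ φ.range ∨ g0⁻¹ * u ∈ φ.range := by
  induction hu using Subgroup.closure_induction with
  | mem x hx =>
    obtain ⟨ξ, hξ, hQ⟩ := hx
    have hQ' : Q2 ξ = -1 := by
      rcases hQ with h | h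
      · exfalso
        have h2 := Q2_apply ξ
        rw [h] at h2
        nlinarith [sq_nonneg (ξ 0), sq_nonneg (ξ 1)]
      · exact h
    right
    have hx : x = gen ξ hQ' := Units.ext hξ
    have hv : Q2 (-v0) = -1 := by rw [Q2_apply]; simp [v0]
    obtain ⟨z, hz, -, -⟩ := prod_eq_φ (-v0) ξ hv hQ'
    refine ⟨z, ?_⟩
    rw [← hz, hx]
    ext
    rw [Units.val_mul, Units.val_mul, g0_inv_val, gen_val, gen_val, map_neg]; rfl
  | one => exact Or.inl (one_mem _)
  | mul x y hx hy ihx ihy =>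
    rcases ihx with h1 | h2 <;> rcases ihy with h3 | h4
    · exact Or.inl (mul_mem h1 h3)
    · right
      have h : g0⁻¹ * (x * y) = (g0⁻¹ * x * g0) * (g0⁻¹ * y) := by group
      rw [h]
      exact mul_mem (conj_r h1) h4
    · right
      have h : g0⁻¹ * (x * y) = (g0⁻¹ * x) * y := by group
      rw [h]
      exact mul_mem h2 h3
    · left
      have h : x * y = (g0 * g0) * ((g0⁻¹ * (g0⁻¹ * x) * g0) * (g0⁻¹ * y)) := by group
      rw [h, g0_sq]
      exact mul_mem ⟨negOne, rfl⟩ (mul_mem (conj_r h2) h4)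
  | inv x hx ih =>
    rcases ih with h1 | h2
    · exact Or.inl (inv_mem h1)
    · right
      have h : g0⁻¹ * x⁻¹ = (g0⁻¹ * (g0⁻¹ * x)⁻¹ * g0) * (g0 * g0)⁻¹ := by group
      rw [h, g0_sq]
      exact mul_mem (conj_r (inv_mem h2)) (inv_mem ⟨negOne, rfl⟩)

lemma φ_mem_pin (z : Circle) : φ z ∈ pinGrp Q2 := by
  have hv : Q2 (-v0) = -1 := by rw [Q2_apply]; simp [v0]
  set b : Fin 2 → ℝ := ![(z : ℂ).re, -(z : ℂ).im] with hb
  have hz1 : (z : ℂ).re * (z : ℂ).re + (z : ℂ).im * (z : ℂ).im = 1 := by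
    have := Circle.normSq_coe z
    rwa [Complex.normSq_apply] at this
  have hbQ : Q2 b = -1 := by
    rw [Q2_apply]
    simp only [hb, Matrix.cons_val_zero, Matrix.cons_val_one, Matrix.head_cons]
    linarith
  obtain ⟨w, hw, hre, him⟩ := prod_eq_φ (-v0) b hv hbQ
  have hwz : w = z := by
    ext
    apply Complex.ext
    · rw [hre]; simp [hb, v0]
    · rw [him]; simp [hb, v0]
  rw [← hwz, ← hw]
  exact mul_mem (gen_mem_pin _ _) (gen_mem_pin _ _)


lemma range_le_spin : φ.range ≤ spinGrp (Qsig 2 0) := by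
  rintro u ⟨z, rfl⟩
  exact ⟨φ_mem_pin z, L_even ↑z⟩

lemma spin_le_range : spinGrp (Qsig 2 0) ≤ φ.range := by
  intro u hu
  have hpin : u ∈ pinGrp Q2 := hu.1
  have heven : (↑u : CliffordAlgebra Q2) ∈ evenOdd Q2 0 := hu.2
  rcases pin_cases hpin with h | h
  · exact h
  · exfalso
    obtain ⟨z, hz⟩ := h
    have hu2 : u = g0 * φ z := by rw [hz]; group
    have hval : (↑(g0 * φ z) : CliffordAlgebra Q2) = ι Q2 v0 * L ↑z := rfl
    have hodd : (↑u : CliffordAlgebra Q2) ∈ evenOdd Q2 1 := by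
      rw [hu2, hval]
      have := SetLike.mul_mem_graded (ι_mem_evenOdd_one Q2 v0) (L_even ↑z)
      simpa using this
    have h0 : (↑u : CliffordAlgebra Q2) = 0 := even_odd_zero heven hodd
    have h1 : (1 : CliffordAlgebra Q2) = 0 := by
      rw [← u.inv_mul, h0, mul_zero]
    exact one_ne_zero h1

end SpinTwoAux

/-- **`Spin_2 ≅ 𝕋`.**
The Spin group `Spin_2 = Spin_{0,2}` (even elements of the Pin group of the negative
definite form `Q_{0,2}` on `ℝ²`) is isomorphic to the circle group of unit complex
numbers. -/


theorem spin_two_iso_circle :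
    Nonempty (spinGrp (Qsig 2 0) ≃* Circle) := by
  have hrange : SpinTwoAux.φ.range = spinGrp (Qsig 2 0) :=
    le_antisymm SpinTwoAux.range_le_spin SpinTwoAux.spin_le_range
  exact ⟨((MonoidHom.ofInjective SpinTwoAux.φ_injective).trans
    (MulEquiv.subgroupCongr hrange)).symm⟩
end
end

section
/- The Pin group Pin⁺_2 = Pin_{2,0} of the positive definite quadratic form Q_{2,0}(x) = x₁² + x₂² on ℝ² is isomorphic as a group to the semidirect product 𝕋 ⋊ ℤ/2ℤ, where 𝕋 is the circle group of complex numbers of absolute value 1 and the nontrivial element of ℤ/2ℤ acts on 𝕋 by the inversion automorphism z ↦ z⁻¹. -/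
noncomputable section
open CliffordAlgebra

/-- The action of `ℤ/2ℤ` on the circle group `𝕋` in which the nontrivial element acts by
the inversion automorphism `z ↦ z⁻¹`. -/
noncomputable def circleInvAction : Multiplicative (ZMod 2) →* MulAut Circle where
  toFun z := if Multiplicative.toAdd z = 0 then 1 else MulEquiv.inv Circle
  map_one' := by simp
  map_mul' := by
    have h2 : MulEquiv.inv Circle * MulEquiv.inv Circle = (1 : MulAut Circle) := by
      ext x
      simp [MulAut.mul_apply]
    have hcases : ∀ x : ZMod 2, x = 0 ∨ x = 1 := by decide
    intro a b
    rcases hcases (Multiplicative.toAdd a) with ha | ha <;>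
      rcases hcases (Multiplicative.toAdd b) with hb | hb <;>
        simp [toAdd_mul, ha, hb, h2, show (2 : ZMod 2) = 0 by decide,
          show (1 + 1 : ZMod 2) = 0 by decide]

namespace PinTwo

lemma Q2_apply (v : Fin 2 → ℝ) : Qsig 2 2 v = v 0 ^ 2 + v 1 ^ 2 := by
  simp [Qsig, QuadraticMap.weightedSumSquares_apply, Fin.sum_univ_two]; ring

abbrev Cl := CliffordAlgebra (Qsig 2 2)

def E1 : Cl := ι (Qsig 2 2) ![1,0]
def E2 : Cl := ι (Qsig 2 2) ![0,1]

lemma hE1 : E1 * E1 = 1 := by rw [E1, ι_sq_scalar, Q2_apply]; norm_num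
lemma hE2 : E2 * E2 = 1 := by rw [E2, ι_sq_scalar, Q2_apply]; norm_num

lemma hswap : E2 * E1 = -(E1 * E2) := by
  have h := ι_mul_ι_add_swap (Q := Qsig 2 2) ![1,0] ![0,1]
  have hp : QuadraticMap.polar (Qsig 2 2) ![1,0] ![0,1] = 0 := by
    simp [QuadraticMap.polar, Q2_apply, show (![1,0] + ![0,1] : Fin 2 → ℝ) = ![1,1] by
      funext i; fin_cases i <;> simp]
  rw [hp, map_zero] at h
  rw [E1, E2, eq_neg_iff_add_eq_zero, add_comm]
  exact h

def ω : Cl := E1 * E2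

lemma hωE1 : ω * E1 = -E2 := by
  calc ω * E1 = E1 * (E2 * E1) := by rw [ω, mul_assoc]
  _ = E1 * (-(E1 * E2)) := by rw [hswap]
  _ = -((E1 * E1) * E2) := by rw [mul_neg, mul_assoc]
  _ = -E2 := by rw [hE1, one_mul]

lemma hE1ω : E1 * ω = E2 := by rw [ω, ← mul_assoc, hE1, one_mul]

lemma hω : ω * ω = -1 := by
  calc ω * ω = (ω * E1) * E2 := by rw [ω, ← mul_assoc]
  _ = (-E2) * E2 := by rw [hωE1]
  _ = -1 := by rw [neg_mul, hE2]

def RC : ℂ →ₐ[ℝ] Cl := Complex.liftAux ω hω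

lemma RC_re_im (z : ℂ) : RC z = algebraMap ℝ Cl z.re + z.im • ω :=
  Complex.liftAux_apply ω hω z

lemma E1_mul_RC (z : ℂ) : E1 * RC z * E1 = RC ((starRingEnd ℂ) z) := by
  rw [RC_re_im, RC_re_im]
  have h1 : E1 * (algebraMap ℝ Cl z.re) * E1 = algebraMap ℝ Cl z.re := by
    rw [← Algebra.commutes, mul_assoc, hE1, mul_one]
  have h2 : E1 * (z.im • ω) * E1 = -(z.im • ω) := by
    rw [mul_smul_comm, smul_mul_assoc, ← smul_neg]
    congr 1
    calc E1 * ω * E1 = E2 * E1 := by rw [hE1ω]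
    _ = -(E1 * E2) := hswap
    _ = -ω := by rw [ω]
  rw [mul_add, add_mul, h1, h2]
  simp [Complex.conj_re, Complex.conj_im, neg_smul]

lemma RC_mul_E1 (z : ℂ) : RC z * E1 = z.re • E1 - z.im • E2 := by
  rw [RC_re_im, add_mul, Algebra.algebraMap_eq_smul_one, smul_mul_assoc, one_mul,
    smul_mul_assoc, hωE1, smul_neg, sub_eq_add_neg]

/-- the matrix representation -/
def F : (Fin 2 → ℝ) →ₗ[ℝ] Matrix (Fin 2) (Fin 2) ℝ where
  toFun v := !![v 1, v 0; v 0, -v 1]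
  map_add' u v := by ext i j; fin_cases i <;> fin_cases j <;> simp <;> try ring
  map_smul' c v := by ext i j; fin_cases i <;> fin_cases j <;> simp

lemma hF : ∀ v, F v * F v = algebraMap ℝ (Matrix (Fin 2) (Fin 2) ℝ) (Qsig 2 2 v) := by
  intro v
  ext i j
  fin_cases i <;> fin_cases j <;>
    simp [F, Matrix.mul_apply, Fin.sum_univ_two, Q2_apply, Matrix.algebraMap_matrix_apply] <;>
    ring

def ψ : Cl →ₐ[ℝ] Matrix (Fin 2) (Fin 2) ℝ := lift (Qsig 2 2) ⟨F, hF⟩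

lemma ψ_E1 : ψ E1 = !![0,1;1,0] := by
  rw [E1, ψ, lift_ι_apply]
  ext i j; fin_cases i <;> fin_cases j <;> simp [F]

lemma ψ_E2 : ψ E2 = !![1,0;0,-1] := by
  rw [E2, ψ, lift_ι_apply]
  ext i j; fin_cases i <;> fin_cases j <;> simp [F]

lemma ψ_ω : ψ ω = !![0,-1;1,0] := by
  rw [ω, map_mul, ψ_E1, ψ_E2]
  ext i j; fin_cases i <;> fin_cases j <;> simp [Matrix.mul_apply, Fin.sum_univ_two]

lemma ψ_RC (z : ℂ) : ψ (RC z) = !![z.re, -z.im; z.im, z.re] := by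
  rw [RC_re_im, map_add, AlgHom.commutes, map_smul, ψ_ω]
  ext i j; fin_cases i <;> fin_cases j <;>
    simp [Matrix.algebraMap_matrix_apply]

end PinTwo

namespace PinTwo

def uE : Clˣ := ⟨E1, E1, hE1, hE1⟩

def uC (z : Circle) : Clˣ where
  val := RC z
  inv := RC ((z⁻¹ : Circle) : ℂ)
  val_inv := by rw [← map_mul, ← Circle.coe_mul, mul_inv_cancel, Circle.coe_one, map_one]
  inv_val := by rw [← map_mul, ← Circle.coe_mul, inv_mul_cancel, Circle.coe_one, map_one]

def f₁ : Circle →* Clˣ where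
  toFun := uC
  map_one' := by ext; show RC _ = 1; rw [Circle.coe_one, map_one]
  map_mul' z w := by ext; show RC _ = RC _ * RC _; rw [Circle.coe_mul, map_mul]

def f₂ : Multiplicative (ZMod 2) →* Clˣ where
  toFun g := if Multiplicative.toAdd g = 0 then 1 else uE
  map_one' := by simp
  map_mul' := by
    have h2 : uE * uE = 1 := by ext; exact hE1
    have hcases : ∀ x : ZMod 2, x = 0 ∨ x = 1 := by decide
    intro a b
    rcases hcases (Multiplicative.toAdd a) with ha | ha <;>
      rcases hcases (Multiplicative.toAdd b) with hb | hb <;>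
        simp [toAdd_mul, ha, hb, h2, show (1 + 1 : ZMod 2) = 0 by decide]

lemma compat : ∀ g, f₁.comp ((circleInvAction g).toMonoidHom)
    = (MulAut.conj (f₂ g)).toMonoidHom.comp f₁ := by
  have hcases : ∀ x : ZMod 2, x = 0 ∨ x = 1 := by decide
  intro g
  ext z
  rcases hcases (Multiplicative.toAdd g) with hg | hg
  · simp only [circleInvAction, f₂, MonoidHom.coe_mk, OneHom.coe_mk, hg, if_pos rfl]
    simp
  · have hne : ¬ (Multiplicative.toAdd g = 0) := by rw [hg]; decide
    have h1 : circleInvAction g = MulEquiv.inv Circle := by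
      simp only [circleInvAction, MonoidHom.coe_mk, OneHom.coe_mk]
      rw [if_neg hne]
    have h2 : f₂ g = uE := by
      simp only [f₂, MonoidHom.coe_mk, OneHom.coe_mk]
      rw [if_neg hne]
    rw [h1, h2]
    show ((f₁ z⁻¹ : Clˣ) : Cl) = ((uE * f₁ z * uE⁻¹ : Clˣ) : Cl)
    have : ((uE⁻¹ : Clˣ) : Cl) = E1 := rfl
    rw [Units.val_mul, Units.val_mul, this]
    show RC ((z⁻¹ : Circle) : ℂ) = E1 * RC z * E1
    rw [E1_mul_RC, Circle.coe_inv_eq_conj]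

def φ : (Circle ⋊[circleInvAction] Multiplicative (ZMod 2)) →* Clˣ :=
  SemidirectProduct.lift f₁ f₂ compat

end PinTwo

namespace PinTwo

lemma iota_pair (a b : ℝ) : ι (Qsig 2 2) ![a,b] = a • E1 + b • E2 := by
  have h : (![a,b] : Fin 2 → ℝ) = a • ![1,0] + b • ![0,1] := by
    funext i; fin_cases i <;> simp
  rw [h, map_add, map_smul, map_smul, E1, E2]

lemma uE_mem : uE ∈ pinGrp (Qsig 2 2) :=
  Subgroup.subset_closure ⟨![1,0], rfl, Or.inl (by rw [Q2_apply]; norm_num)⟩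

lemma circle_sq (z : Circle) : (z : ℂ).re ^ 2 + (z : ℂ).im ^ 2 = 1 := by
  have h := Circle.normSq_coe z
  rw [Complex.normSq_apply] at h
  nlinarith

lemma uC_mem (z : Circle) : uC z ∈ pinGrp (Qsig 2 2) := by
  set a := (z : ℂ).re with ha
  set b := (z : ℂ).im with hb
  have hq : Qsig 2 2 ![a, b] = 1 := by rw [Q2_apply]; simpa using circle_sq z
  have hv : (⟨ι (Qsig 2 2) ![a,b], ι (Qsig 2 2) ![a,b],
      by rw [ι_sq_scalar, hq, map_one], by rw [ι_sq_scalar, hq, map_one]⟩ : Clˣ)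
      ∈ pinGrp (Qsig 2 2) :=
    Subgroup.subset_closure ⟨![a,b], rfl, Or.inl hq⟩
  have key : uC z = uE * ⟨ι (Qsig 2 2) ![a,b], ι (Qsig 2 2) ![a,b],
      by rw [ι_sq_scalar, hq, map_one], by rw [ι_sq_scalar, hq, map_one]⟩ := by
    ext
    show RC z = E1 * ι (Qsig 2 2) ![a,b]
    have hωd : E1 * E2 = ω := rfl
    rw [iota_pair, mul_add, mul_smul_comm, mul_smul_comm, hE1, hωd, RC_re_im,
      Algebra.algebraMap_eq_smul_one]
  rw [key]
  exact mul_mem uE_mem hv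

lemma φ_mem (x : Circle ⋊[circleInvAction] Multiplicative (ZMod 2)) :
    φ x ∈ pinGrp (Qsig 2 2) := by
  rw [← SemidirectProduct.inl_left_mul_inr_right x, map_mul]
  refine mul_mem ?_ ?_
  · rw [φ, SemidirectProduct.lift_inl]; exact uC_mem _
  · rw [φ, SemidirectProduct.lift_inr]
    by_cases h : Multiplicative.toAdd x.right = 0
    · have : f₂ x.right = 1 := by simp only [f₂, MonoidHom.coe_mk, OneHom.coe_mk, if_pos h]
      rw [this]; exact one_mem _
    · have : f₂ x.right = uE := by simp only [f₂, MonoidHom.coe_mk, OneHom.coe_mk, if_neg h]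
      rw [this]; exact uE_mem

lemma pin_le_range : pinGrp (Qsig 2 2) ≤ φ.range := by
  rw [pinGrp, Subgroup.closure_le]
  rintro u ⟨ξ, hval, hQ | hQ⟩
  swap
  · exfalso; rw [Q2_apply] at hQ; nlinarith [sq_nonneg (ξ 0), sq_nonneg (ξ 1)]
  · set a := ξ 0 with ha
    set b := ξ 1 with hb
    have habs : ‖(⟨a, -b⟩ : ℂ)‖ = 1 := by
      have h1 : Complex.normSq ⟨a, -b⟩ = 1 := by
        rw [Complex.normSq_mk]; rw [Q2_apply] at hQ; nlinarith
      have h2 := Complex.sq_norm ⟨a, -b⟩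
      rw [h1] at h2
      nlinarith [norm_nonneg (⟨a, -b⟩ : ℂ)]
    set z : Circle := ⟨⟨a, -b⟩, mem_sphere_zero_iff_norm.mpr habs⟩ with hz
    refine ⟨SemidirectProduct.inl z * SemidirectProduct.inr (Multiplicative.ofAdd 1), ?_⟩
    have h2 : f₂ (Multiplicative.ofAdd (1 : ZMod 2)) = uE := by
      simp only [f₂, MonoidHom.coe_mk, OneHom.coe_mk]
      rw [if_neg (by rw [toAdd_ofAdd]; decide)]
    rw [map_mul, φ, SemidirectProduct.lift_inl, SemidirectProduct.lift_inr, h2]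
    ext
    show RC (z : ℂ) * E1 = (u : Cl)
    rw [RC_mul_E1, hval]
    have hre : ((z : ℂ)).re = a := rfl
    have him : ((z : ℂ)).im = -b := rfl
    rw [hre, him, neg_smul, sub_neg_eq_add, ← iota_pair]
    congr 1
    funext i; fin_cases i <;> simp [ha, hb]

end PinTwo

namespace PinTwo

lemma matrix_one : (1 : Matrix (Fin 2) (Fin 2) ℝ) = !![1,0;0,1] := by
  ext i j; fin_cases i <;> fin_cases j <;> simp [Matrix.one_apply]

lemma φ_inj : Function.Injective φ := by
  rw [injective_iff_map_eq_one]
  intro x hx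
  have hval : ((φ x : Clˣ) : Cl) = 1 := by rw [hx]; rfl
  have hφx : ((φ x : Clˣ) : Cl)
      = RC (x.left : ℂ) * ((f₂ x.right : Clˣ) : Cl) := by
    conv_lhs => rw [← SemidirectProduct.inl_left_mul_inr_right x]
    rw [map_mul, φ, SemidirectProduct.lift_inl, SemidirectProduct.lift_inr, Units.val_mul]
    rfl
  by_cases h : Multiplicative.toAdd x.right = 0
  · have h2 : f₂ x.right = 1 := by simp only [f₂, MonoidHom.coe_mk, OneHom.coe_mk, if_pos h]
    rw [hφx, h2, Units.val_one, mul_one] at hval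
    have hm := congrArg ψ hval
    rw [ψ_RC, map_one, matrix_one] at hm
    have hre := congrFun (congrFun hm 0) 0
    have him := congrFun (congrFun hm 1) 0
    simp at hre him
    have hz : x.left = 1 := by
      rw [← Circle.coe_eq_one]
      apply Complex.ext <;> simp [hre, him]
    have hg : x.right = 1 := by
      rw [← ofAdd_toAdd x.right, h]; rfl
    ext
    · rw [hz]; rfl
    · rw [hg]; rfl
  · exfalso
    have h2 : f₂ x.right = uE := by simp only [f₂, MonoidHom.coe_mk, OneHom.coe_mk, if_neg h]
    rw [hφx, h2] at hval
    have hval2 : RC (x.left : ℂ) = E1 := by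
      have := congrArg (· * E1) hval
      simpa [uE, mul_assoc, hE1] using this
    have hm := congrArg ψ hval2
    rw [ψ_RC, ψ_E1] at hm
    have h1 := congrFun (congrFun hm 0) 1
    have h2' := congrFun (congrFun hm 1) 0
    simp at h1 h2'
    rw [h2'] at h1
    norm_num at h1

end PinTwo


/-- **`Pin⁺_2 ≅ 𝕋 ⋊ ℤ/2`.**
The Pin group `Pin⁺_2 = Pin_{2,0}` of the positive definite form `Q_{2,0}` on `ℝ²` is
isomorphic to the semidirect product `𝕋 ⋊ ℤ/2ℤ`, where the nontrivial element of `ℤ/2ℤ`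
acts on the circle group `𝕋` by inversion. -/
theorem pinPlus_two_iso_circle_rtimes_zmod2 :
    Nonempty (pinGrp (Qsig 2 2) ≃* (Circle ⋊[circleInvAction] Multiplicative (ZMod 2))) := by
  refine ⟨(MulEquiv.ofBijective
    ((PinTwo.φ).codRestrict (pinGrp (Qsig 2 2)) PinTwo.φ_mem) ⟨?_, ?_⟩).symm⟩
  · intro a b hab
    exact PinTwo.φ_inj (congrArg Subtype.val hab)
  · rintro ⟨u, hu⟩
    obtain ⟨s, hs⟩ := PinTwo.pin_le_range hu
    exact ⟨s, Subtype.ext hs⟩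
end
end
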